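/- arXiv:0910.3189 — 7 statements merged into one kernel-verified Lean document; each statement's English description precedes it below -/
import Mathlib

section
/- Let T be a complete L-theory. Suppose there exist L-formulas φ₀(x,ȳ) and φ₁(x,ȳ), a model M of T, and mutually indiscernible sequences (āᵢ)_{i∈ℕ} and (b̄ᵢ)_{i∈ℕ} of ȳ-tuples from M such that the formula φ₀(x,ā₀) ∧ ¬φ₀(x,ā₁) ∧ φ₁(x,b̄₀) ∧ ¬φ₁(x,b̄₁) is realized by some element of M. Then T is not dp-minimal, i.e. some model of T admits an ICT pattern. -/
open FirstOrder Language Set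

universe u v w

namespace DpMin

variable {L : FirstOrder.Language.{u, v}}

/-- Realization of a formula `φ(x, ȳ)` at an element `x` and a parameter tuple `ā`. -/
def Real1 {M : Type w} [L.Structure M] {m : ℕ}
    (φ : L.Formula (Fin 1 ⊕ Fin m)) (x : M) (a : Fin m → M) : Prop :=
  φ.Realize (Sum.elim (fun _ => x) a)

/-- An ICT pattern: for all `i j`, the set
`{φ(x,āᵢ), ψ(x,b̄ⱼ)} ∪ {¬φ(x,āₗ) : l ≠ i} ∪ {¬ψ(x,b̄ₖ) : k ≠ j}` is consistent, i.e. every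
finite subset of it is realized by some element of `M`. -/
def IsICTPattern {M : Type w} [L.Structure M] {m : ℕ}
    (φ ψ : L.Formula (Fin 1 ⊕ Fin m)) (a b : ℕ → Fin m → M) : Prop :=
  ∀ (i j : ℕ) (s : Finset ℕ), ∃ x : M,
    Real1 φ x (a i) ∧ Real1 ψ x (b j) ∧
    (∀ l ∈ s, l ≠ i → ¬ Real1 φ x (a l)) ∧
    (∀ k ∈ s, k ≠ j → ¬ Real1 ψ x (b k))

/-- A theory is dp-minimal if no model of it admits an ICT pattern. -/
def IsDpMinimal (T : L.Theory) : Prop :=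
  ∀ (M : Type w) [L.Structure M] [Nonempty M], M ⊨ T →
    ¬ ∃ (m : ℕ) (φ ψ : L.Formula (Fin 1 ⊕ Fin m)) (a b : ℕ → Fin m → M),
      IsICTPattern φ ψ a b

/-- The sequence of `m`-tuples `a`, restricted to indices in `S`, is indiscernible over the
parameter set `A`: increasing tuples of indices from `S` realize the same formulas with
parameters from `A`. -/
def IndiscernibleOn {M : Type w} [L.Structure M] {I : Type*} [LinearOrder I] {m : ℕ}
    (a : I → Fin m → M) (S : Set I) (A : Set M) : Prop :=
  ∀ (n k : ℕ) (φ : L.Formula ((Fin n × Fin m) ⊕ Fin k)) (c : Fin k → M),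
    (∀ t, c t ∈ A) →
    ∀ i j : Fin n → I, StrictMono i → StrictMono j →
      (∀ p, i p ∈ S) → (∀ p, j p ∈ S) →
      (φ.Realize (Sum.elim (fun p => a (i p.1) p.2) c) ↔
        φ.Realize (Sum.elim (fun p => a (j p.1) p.2) c))

/-- Indiscernibility of the whole sequence over a parameter set. -/
def IndiscernibleOver {M : Type w} [L.Structure M] {I : Type*} [LinearOrder I] {m : ℕ}
    (a : I → Fin m → M) (A : Set M) : Prop :=
  IndiscernibleOn (L := L) a Set.univ A

/-- Two sequences are mutually indiscernible if each is indiscernible over the union of the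
ranges of the other. -/
def MutuallyIndiscernible {M : Type w} [L.Structure M] {m : ℕ}
    (a b : ℕ → Fin m → M) : Prop :=
  IndiscernibleOver (L := L) a (⋃ j, Set.range (b j)) ∧
  IndiscernibleOver (L := L) b (⋃ i, Set.range (a i))

end DpMin

namespace DpMin

section Aux

variable {L : FirstOrder.Language.{u, v}} {M : Type w} [L.Structure M] {m k : ℕ}

/-- `φ(x, block p)` with `x` the bound variable, as formula in blocks + params. -/
def atomF (φ : L.Formula (Fin 1 ⊕ Fin m)) (n k : ℕ) (p : Fin n) :
    L.BoundedFormula ((Fin n × Fin m) ⊕ Fin k) 1 :=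
  BoundedFormula.relabel
    (Sum.elim (fun _ => Sum.inr 0) (fun y => Sum.inl (Sum.inl (p, y)))) φ

theorem realize_atomF {φ : L.Formula (Fin 1 ⊕ Fin m)} {n k : ℕ} {p : Fin n}
    {v : (Fin n × Fin m) ⊕ Fin k → M} {xs : Fin 1 → M} :
    (atomF φ n k p).Realize v xs ↔ Real1 φ (xs 0) (fun y => v (Sum.inl (p, y))) := by
  rw [atomF, BoundedFormula.realize_relabel]
  have h1 : (Sum.elim v (xs ∘ Fin.castAdd 0) ∘
      Sum.elim (fun _ => Sum.inr 0) fun y => Sum.inl (Sum.inl (p, y))) =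
      Sum.elim (fun _ : Fin 1 => xs 0) (fun y => v (Sum.inl (p, y))) := by
    funext z
    cases z with
    | inl z => simp
    | inr z => simp
  rw [h1]
  unfold Real1 Formula.Realize
  exact iff_of_eq (congrArg _ (Subsingleton.elim _ _))

/-- lift a parameter-only formula (in one object variable) to blocks + params. -/
def liftParam (ψ : L.BoundedFormula (Fin k) 1) (n : ℕ) :
    L.BoundedFormula ((Fin n × Fin m) ⊕ Fin k) 1 :=
  BoundedFormula.relabel (fun t => Sum.inl (Sum.inr t)) ψ

theorem realize_liftParam {ψ : L.BoundedFormula (Fin k) 1} {n : ℕ}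
    {v : (Fin n × Fin m) ⊕ Fin k → M} {xs : Fin 1 → M} :
    (liftParam (m := m) ψ n).Realize v xs ↔ ψ.Realize (fun t => v (Sum.inr t)) xs := by
  rw [liftParam, BoundedFormula.realize_relabel]
  have h1 : (Sum.elim v (xs ∘ Fin.castAdd 1) ∘ fun t => Sum.inl (Sum.inr t)) =
      (fun t => v (Sum.inr t)) := by funext t; simp
  rw [h1]
  have h2 : (xs ∘ Fin.natAdd 0) = xs := by
    funext i; exact congrArg xs (Fin.ext (Nat.zero_add _))
  rw [h2]

/-- conjunction of a list of formulas -/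
def listInf : List (L.BoundedFormula α n) → L.BoundedFormula α n
  | [] => ⊤
  | f :: l => f ⊓ listInf l

theorem realize_listInf {α : Type*} {n : ℕ} {l : List (L.BoundedFormula α n)}
    {v : α → M} {xs : Fin n → M} :
    (listInf l).Realize v xs ↔ ∀ f ∈ l, f.Realize v xs := by
  induction l with
  | nil => simp [listInf]
  | cons f l ih => simp [listInf, BoundedFormula.realize_inf, ih]

/-- index of the left element of the `r`-th pair among `2t+2` indices. -/
def pIdxL {t : ℕ} (r : Fin (t + 1)) : Fin (2 * t + 2) :=
  ⟨2 * r.val, by have := r.isLt; omega⟩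

/-- index of the right element of the `r`-th pair among `2t+2` indices. -/
def pIdxR {t : ℕ} (r : Fin (t + 1)) : Fin (2 * t + 2) :=
  ⟨2 * r.val + 1, by have := r.isLt; omega⟩

/-- the inner formula of the pattern: alternation at pair `r₀`, constancy at other pairs,
plus the parameter formula. -/
def innerF (φ : L.Formula (Fin 1 ⊕ Fin m)) (ψ : L.BoundedFormula (Fin k) 1)
    (t : ℕ) (r₀ : Fin (t + 1)) :
    L.BoundedFormula ((Fin (2 * t + 2) × Fin m) ⊕ Fin k) 1 :=
  atomF φ _ k (pIdxL r₀) ⊓ (atomF φ _ k (pIdxR r₀)).not ⊓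
  listInf (((List.finRange (t + 1)).filter (fun r => r ≠ r₀)).map
    (fun r => (atomF φ _ k (pIdxL r)).iff (atomF φ _ k (pIdxR r)))) ⊓
  liftParam ψ _

/-- the semantic pattern on a family of tuples. -/
def PatOn (φ : L.Formula (Fin 1 ⊕ Fin m)) (t : ℕ) (r₀ : Fin (t + 1))
    (g : Fin (2 * t + 2) → Fin m → M) (x : M) : Prop :=
  Real1 φ x (g (pIdxL r₀)) ∧ ¬ Real1 φ x (g (pIdxR r₀)) ∧
  ∀ r, r ≠ r₀ → (Real1 φ x (g (pIdxL r)) ↔ Real1 φ x (g (pIdxR r)))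

theorem realize_innerF {φ : L.Formula (Fin 1 ⊕ Fin m)} {ψ : L.BoundedFormula (Fin k) 1}
    {t : ℕ} {r₀ : Fin (t + 1)} {v : (Fin (2 * t + 2) × Fin m) ⊕ Fin k → M} {xs : Fin 1 → M} :
    (innerF φ ψ t r₀).Realize v xs ↔
      PatOn φ t r₀ (fun p y => v (Sum.inl (p, y))) (xs 0) ∧
        ψ.Realize (fun i => v (Sum.inr i)) xs := by
  rw [innerF]
  simp only [BoundedFormula.realize_inf, BoundedFormula.realize_not, realize_listInf,
    realize_liftParam, realize_atomF, List.mem_map, List.mem_filter, List.mem_finRange,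
    true_and, decide_eq_true_eq]
  constructor
  · rintro ⟨⟨⟨h1, h2⟩, h3⟩, h4⟩
    refine ⟨⟨h1, h2, fun r hr => ?_⟩, h4⟩
    have := h3 _ ⟨r, hr, rfl⟩
    rwa [BoundedFormula.realize_iff, realize_atomF, realize_atomF] at this
  · rintro ⟨⟨h1, h2, h3⟩, h4⟩
    refine ⟨⟨⟨h1, h2⟩, ?_⟩, h4⟩
    rintro f ⟨r, hr, rfl⟩
    rw [BoundedFormula.realize_iff, realize_atomF, realize_atomF]
    exact h3 r hr

theorem realize_innerF_ex {φ : L.Formula (Fin 1 ⊕ Fin m)} {ψ : L.BoundedFormula (Fin k) 1}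
    {t : ℕ} {r₀ : Fin (t + 1)} {v : (Fin (2 * t + 2) × Fin m) ⊕ Fin k → M} :
    Formula.Realize ((innerF φ ψ t r₀).ex) v ↔
      ∃ x : M, PatOn φ t r₀ (fun p y => v (Sum.inl (p, y))) x ∧
        ψ.Realize (fun i => v (Sum.inr i)) (fun _ => x) := by
  unfold Formula.Realize
  rw [BoundedFormula.realize_ex]
  constructor
  · rintro ⟨x, hx⟩
    rw [realize_innerF] at hx
    have hs : (Fin.snoc (default : Fin 0 → M) x : Fin 1 → M) = fun _ => x := by
      funext i
      simp [Fin.snoc]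
    rw [hs] at hx
    exact ⟨x, hx⟩
  · rintro ⟨x, hx⟩
    refine ⟨x, ?_⟩
    rw [realize_innerF]
    have hs : (Fin.snoc (default : Fin 0 → M) x : Fin 1 → M) = fun _ => x := by
      funext i
      simp [Fin.snoc]
    rw [hs]
    exact hx



/-- the full semantic pattern. -/
def Pat (φ : L.Formula (Fin 1 ⊕ Fin m)) (ψ : L.BoundedFormula (Fin k) 1)
    (e : ℕ → Fin m → M) (c : Fin k → M) (t : ℕ) (r₀ : Fin (t + 1))
    (u : Fin (2 * t + 2) → ℕ) (x : M) : Prop :=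
  PatOn φ t r₀ (fun p => e (u p)) x ∧ ψ.Realize c (fun _ => x)

theorem pat_transfer {φ : L.Formula (Fin 1 ⊕ Fin m)} {ψ : L.BoundedFormula (Fin k) 1}
    {e : ℕ → Fin m → M} {A : Set M} {c : Fin k → M}
    (hind : IndiscernibleOver (L := L) e A) (hc : ∀ i, c i ∈ A)
    {t : ℕ} {r₀ : Fin (t + 1)} {u u' : Fin (2 * t + 2) → ℕ}
    (hu : StrictMono u) (hu' : StrictMono u') :
    (∃ x, Pat φ ψ e c t r₀ u x) ↔ (∃ x, Pat φ ψ e c t r₀ u' x) := by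
  have h := hind (2 * t + 2) k ((innerF φ ψ t r₀).ex) c hc u u' hu hu'
    (fun _ => Set.mem_univ _) (fun _ => Set.mem_univ _)
  rw [realize_innerF_ex, realize_innerF_ex] at h
  exact h

theorem pigeon3 (P : ℕ → Prop) (n₁ n₂ n₃ : ℕ) (h12 : n₁ < n₂) (h23 : n₂ < n₃) :
    ∃ p q, p < q ∧ n₁ ≤ p ∧ q ≤ n₃ ∧ (P p ↔ P q) := by
  by_cases h1 : P n₁ ↔ P n₂
  · exact ⟨n₁, n₂, h12, le_refl _, by omega, h1⟩
  by_cases h2 : P n₂ ↔ P n₃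
  · exact ⟨n₂, n₃, h23, by omega, le_refl _, h2⟩
  · exact ⟨n₁, n₃, by omega, le_refl _, le_refl _, by tauto⟩

theorem pat_exists {φ : L.Formula (Fin 1 ⊕ Fin m)} {ψ : L.BoundedFormula (Fin k) 1}
    {e : ℕ → Fin m → M} {A : Set M} {c : Fin k → M}
    (hind : IndiscernibleOver (L := L) e A) (hc : ∀ i, c i ∈ A)
    (hbase : ∃ x, Real1 φ x (e 0) ∧ ¬ Real1 φ x (e 1) ∧ ψ.Realize c (fun _ => x)) :
    ∀ (t : ℕ) (r₀ : Fin (t + 1)) (u : Fin (2 * t + 2) → ℕ), StrictMono u →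
      ∃ x, Pat φ ψ e c t r₀ u x := by
  intro t
  induction t with
  | zero =>
    intro r₀ u hu
    refine (pat_transfer hind hc (Fin.val_strictMono) hu).mp ?_
    obtain ⟨x, h1, h2, h3⟩ := hbase
    have hr : r₀ = ⟨0, by omega⟩ := Fin.ext (by have := r₀.isLt; omega)
    subst hr
    exact ⟨x, ⟨h1, h2, fun r hrr =>
      absurd (Fin.ext (by have := r.isLt; omega) : r = ⟨0, by omega⟩) hrr⟩, h3⟩
  | succ t ih =>
    intro r₀ u hu
    by_cases hrt : r₀.val ≤ t
    · -- insert new constant pair at the top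
      obtain ⟨x, hx⟩ := ih ⟨r₀.val, by omega⟩ (fun j => (j : ℕ)) Fin.val_strictMono
      obtain ⟨p, q, hpq, hplb, hqub, hiff⟩ := pigeon3 (fun nn => Real1 φ x (e nn))
        (2 * t + 2) (2 * t + 3) (2 * t + 4) (by omega) (by omega)
      set u'' : Fin (2 * (t + 1) + 2) → ℕ :=
        fun j => if (j : ℕ) < 2 * t + 2 then (j : ℕ) else
          if (j : ℕ) = 2 * t + 2 then p else q with hdef
      have hmono : StrictMono u'' := by
        intro j j' hlt
        have hj := j.isLt
        have hj' := j'.isLt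
        have hlt' : (j : ℕ) < (j' : ℕ) := hlt
        simp only [hdef]
        split_ifs <;> first | contradiction | omega
      refine (pat_transfer hind hc hmono hu).mp ⟨x, ⟨?_, ?_, ?_⟩, hx.2⟩
      · have eq1 : u'' (pIdxL r₀) = 2 * r₀.val := by
          simp only [hdef, pIdxL]
          split_ifs <;> first | contradiction | omega
        show Real1 φ x (e (u'' (pIdxL r₀)))
        rw [eq1]
        exact hx.1.1
      · have eq1 : u'' (pIdxR r₀) = 2 * r₀.val + 1 := by
          simp only [hdef, pIdxR]
          split_ifs <;> first | contradiction | omega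
        show ¬ Real1 φ x (e (u'' (pIdxR r₀)))
        rw [eq1]
        exact hx.1.2.1
      · intro r hr
        show Real1 φ x (e (u'' (pIdxL r))) ↔ Real1 φ x (e (u'' (pIdxR r)))
        by_cases hcase : r.val ≤ t
        · have eqL : u'' (pIdxL r) = 2 * r.val := by
            simp only [hdef, pIdxL]
            split_ifs <;> first | contradiction | omega
          have eqR : u'' (pIdxR r) = 2 * r.val + 1 := by
            simp only [hdef, pIdxR]
            split_ifs <;> first | contradiction | omega
          rw [eqL, eqR]
          have hne : (⟨r.val, by omega⟩ : Fin (t + 1)) ≠ ⟨r₀.val, by omega⟩ := by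
            intro hh
            exact hr (Fin.ext (by simpa [Fin.ext_iff] using hh))
          exact hx.1.2.2 ⟨r.val, by omega⟩ hne
        · have hrv : r.val = t + 1 := by have := r.isLt; omega
          have eqL : u'' (pIdxL r) = p := by
            simp only [hdef, pIdxL]
            split_ifs <;> first | contradiction | omega
          have eqR : u'' (pIdxR r) = q := by
            simp only [hdef, pIdxR]
            split_ifs <;> first | contradiction | omega
          rw [eqL, eqR]
          exact hiff
    · -- insert new constant pair at the bottom
      have hrv : r₀.val = t + 1 := by have := r₀.isLt; omega
      obtain ⟨x, hx⟩ := ih (Fin.last t) (fun j => (j : ℕ) + 3)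
        (fun j j' h => by simpa using (show (j : ℕ) < (j' : ℕ) from h))
      obtain ⟨p, q, hpq, hplb, hqub, hiff⟩ := pigeon3 (fun nn => Real1 φ x (e nn))
        0 1 2 (by omega) (by omega)
      set u'' : Fin (2 * (t + 1) + 2) → ℕ :=
        fun j => if (j : ℕ) = 0 then p else if (j : ℕ) = 1 then q else (j : ℕ) + 1 with hdef
      have hmono : StrictMono u'' := by
        intro j j' hlt
        have hlt' : (j : ℕ) < (j' : ℕ) := hlt
        simp only [hdef]
        split_ifs <;> first | contradiction | omega
      refine (pat_transfer hind hc hmono hu).mp ⟨x, ⟨?_, ?_, ?_⟩, hx.2⟩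
      · have eq1 : u'' (pIdxL r₀) = 2 * t + 3 := by
          simp only [hdef, pIdxL]
          split_ifs <;> first | contradiction | omega
        show Real1 φ x (e (u'' (pIdxL r₀)))
        rw [eq1]
        exact hx.1.1
      · have eq1 : u'' (pIdxR r₀) = 2 * t + 4 := by
          simp only [hdef, pIdxR]
          split_ifs <;> first | contradiction | omega
        show ¬ Real1 φ x (e (u'' (pIdxR r₀)))
        rw [eq1]
        exact hx.1.2.1
      · intro r hr
        have hrl : r.val ≤ t := by
          have := r.isLt
          have : r.val ≠ t + 1 := fun hh => hr (Fin.ext (by omega))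
          omega
        show Real1 φ x (e (u'' (pIdxL r))) ↔ Real1 φ x (e (u'' (pIdxR r)))
        by_cases hc0 : r.val = 0
        · have eqL : u'' (pIdxL r) = p := by
            simp only [hdef, pIdxL]
            split_ifs <;> first | contradiction | omega
          have eqR : u'' (pIdxR r) = q := by
            simp only [hdef, pIdxR]
            split_ifs <;> first | contradiction | omega
          rw [eqL, eqR]
          exact hiff
        · have eqL : u'' (pIdxL r) = 2 * (r.val - 1) + 3 := by
            simp only [hdef, pIdxL]
            split_ifs <;> first | contradiction | omega
          have eqR : u'' (pIdxR r) = 2 * (r.val - 1) + 1 + 3 := by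
            simp only [hdef, pIdxR]
            split_ifs <;> first | contradiction | omega
          rw [eqL, eqR]
          have hne : (⟨r.val - 1, by omega⟩ : Fin (t + 1)) ≠ Fin.last t := by
            intro hh
            have : r.val - 1 = t := by simpa [Fin.ext_iff] using hh
            omega
          exact hx.1.2.2 ⟨r.val - 1, by omega⟩ hne

theorem realize_relabel_one {φ : L.Formula (Fin 1 ⊕ Fin m)} {β : Type*} {h : Fin m → β}
    {v : β → M} {xs : Fin 1 → M} :
    (BoundedFormula.relabel (Sum.elim (fun _ => Sum.inr 0) (fun y => Sum.inl (h y))) φ :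
      L.BoundedFormula β 1).Realize v xs ↔ Real1 φ (xs 0) (fun y => v (h y)) := by
  rw [BoundedFormula.realize_relabel]
  have h1 : (Sum.elim v (xs ∘ Fin.castAdd 0) ∘
      Sum.elim (fun _ => Sum.inr 0) fun y => Sum.inl (h y)) =
      Sum.elim (fun _ : Fin 1 => xs 0) (fun y => v (h y)) := by
    funext z
    cases z with
    | inl z => simp
    | inr z => simp
  rw [h1]
  unfold Real1 Formula.Realize
  exact iff_of_eq (congrArg _ (Subsingleton.elim _ _))

/-- `φ(x, first half) ∧ ¬φ(x, second half)` with parameters `Fin (m+m)`. -/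
def pairP (φ : L.Formula (Fin 1 ⊕ Fin m)) : L.BoundedFormula (Fin (m + m)) 1 :=
  (BoundedFormula.relabel
      (Sum.elim (fun _ => Sum.inr 0) (fun y => Sum.inl (Fin.castAdd m y))) φ :
    L.BoundedFormula (Fin (m + m)) 1) ⊓
  (BoundedFormula.relabel
      (Sum.elim (fun _ => Sum.inr 0) (fun y => Sum.inl (Fin.natAdd m y))) φ :
    L.BoundedFormula (Fin (m + m)) 1).not

theorem realize_pairP {φ : L.Formula (Fin 1 ⊕ Fin m)} {cc : Fin (m + m) → M} {xs : Fin 1 → M} :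
    (pairP φ).Realize cc xs ↔
      Real1 φ (xs 0) (fun y => cc (Fin.castAdd m y)) ∧
      ¬ Real1 φ (xs 0) (fun y => cc (Fin.natAdd m y)) := by
  rw [pairP, BoundedFormula.realize_inf, BoundedFormula.realize_not,
    realize_relabel_one, realize_relabel_one]

/-- the one-side pattern formula as a parameter formula. -/
def sideF (φ : L.Formula (Fin 1 ⊕ Fin m)) (t : ℕ) (r₀ : Fin (t + 1)) :
    L.BoundedFormula (Fin ((2 * t + 2) * m)) 1 :=
  BoundedFormula.relabel
    (Sum.elim (fun pr => Sum.inl (finProdFinEquiv pr)) (fun z : Fin 0 => z.elim0))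
    (innerF φ (⊤ : L.BoundedFormula (Fin 0) 1) t r₀)

theorem realize_sideF {φ : L.Formula (Fin 1 ⊕ Fin m)} {t : ℕ} {r₀ : Fin (t + 1)}
    {cc : Fin ((2 * t + 2) * m) → M} {xs : Fin 1 → M} :
    (sideF φ t r₀).Realize cc xs ↔
      PatOn φ t r₀ (fun p y => cc (finProdFinEquiv (p, y))) (xs 0) := by
  rw [sideF, BoundedFormula.realize_relabel]
  rw [realize_innerF]
  constructor
  · rintro ⟨h, -⟩
    exact h
  · intro h
    refine ⟨h, ?_⟩
    exact BoundedFormula.realize_top.mpr trivial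

/-- the ICT pattern formula: `φ(x, first half) ∧ ¬φ(x, second half)`. -/
def pairFormula (φ : L.Formula (Fin 1 ⊕ Fin m)) : L.Formula (Fin 1 ⊕ Fin (m + m)) :=
  φ.relabel (Sum.map id (Fin.castAdd m)) ⊓ (φ.relabel (Sum.map id (Fin.natAdd m))).not

theorem real1_pairFormula {φ : L.Formula (Fin 1 ⊕ Fin m)} {x : M} {g h : Fin m → M} :
    Real1 (pairFormula φ) x (Fin.append g h) ↔ Real1 φ x g ∧ ¬ Real1 φ x h := by
  unfold Real1 pairFormula
  rw [Formula.realize_inf, Formula.realize_not, Formula.realize_relabel,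
    Formula.realize_relabel]
  have h1 : (Sum.elim (fun _ : Fin 1 => x) (Fin.append g h) ∘ Sum.map id (Fin.castAdd m)) =
      Sum.elim (fun _ : Fin 1 => x) g := by
    funext z
    cases z with
    | inl z => simp
    | inr z => simp [Fin.append_left]
  have h2 : (Sum.elim (fun _ : Fin 1 => x) (Fin.append g h) ∘ Sum.map id (Fin.natAdd m)) =
      Sum.elim (fun _ : Fin 1 => x) h := by
    funext z
    cases z with
    | inl z => simp
    | inr z =>
      simp only [Function.comp_apply, Sum.map_inr, Sum.elim_inr]
      exact Fin.append_right g h z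
  rw [h1, h2]

theorem mkU (S : Finset ℕ) {tt : ℕ} (h : S.card = tt + 1) :
    ∃ uu : Fin (2 * tt + 2) → ℕ, StrictMono uu ∧
      (∀ r : Fin (tt + 1), uu (pIdxL r) = 2 * ((S.orderIsoOfFin h r : ℕ))) ∧
      (∀ r : Fin (tt + 1), uu (pIdxR r) = 2 * ((S.orderIsoOfFin h r : ℕ)) + 1) := by
  set o := S.orderIsoOfFin h with ho
  set f : ℕ → ℕ := fun d => if hd : d < tt + 1 then ((o ⟨d, hd⟩ : ℕ)) else 0 with hf
  have hfeq : ∀ (d : ℕ) (hd : d < tt + 1), f d = (o ⟨d, hd⟩ : ℕ) := by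
    intro d hd
    simp only [hf]
    rw [dif_pos hd]
  refine ⟨fun jj => 2 * f ((jj : ℕ) / 2) + (jj : ℕ) % 2, ?_, ?_, ?_⟩
  · intro jj jj' hlt
    show 2 * f ((jj : ℕ) / 2) + (jj : ℕ) % 2 < 2 * f ((jj' : ℕ) / 2) + (jj' : ℕ) % 2
    have hlt' : (jj : ℕ) < (jj' : ℕ) := hlt
    have hjj := jj.isLt
    have hjj' := jj'.isLt
    by_cases hd : (jj : ℕ) / 2 = (jj' : ℕ) / 2
    · simp only [hd]
      omega
    · have hdlt : (jj : ℕ) / 2 < (jj' : ℕ) / 2 := by omega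
      have h1 : ((jj : ℕ) / 2) < tt + 1 := by omega
      have h2 : ((jj' : ℕ) / 2) < tt + 1 := by omega
      have h3 : (o ⟨(jj : ℕ) / 2, h1⟩ : ℕ) < (o ⟨(jj' : ℕ) / 2, h2⟩ : ℕ) := by
        have := o.strictMono (show (⟨(jj : ℕ) / 2, h1⟩ : Fin (tt + 1)) < ⟨(jj' : ℕ) / 2, h2⟩
          from hdlt)
        exact_mod_cast this
      rw [hfeq _ h1, hfeq _ h2]
      omega
  · intro r
    show 2 * f (((pIdxL r : Fin (2 * tt + 2)) : ℕ) / 2) +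
      ((pIdxL r : Fin (2 * tt + 2)) : ℕ) % 2 = _
    have hv : ((pIdxL r : Fin (2 * tt + 2)) : ℕ) = 2 * r.val := rfl
    rw [hv]
    have hdiv : (2 * r.val) / 2 = r.val := by omega
    have hmod : (2 * r.val) % 2 = 0 := by omega
    rw [hdiv, hmod, hfeq _ r.isLt]
    have hr : (⟨r.val, r.isLt⟩ : Fin (tt + 1)) = r := Fin.ext rfl
    rw [hr]
    omega
  · intro r
    show 2 * f (((pIdxR r : Fin (2 * tt + 2)) : ℕ) / 2) +
      ((pIdxR r : Fin (2 * tt + 2)) : ℕ) % 2 = _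
    have hv : ((pIdxR r : Fin (2 * tt + 2)) : ℕ) = 2 * r.val + 1 := rfl
    rw [hv]
    have hdiv : (2 * r.val + 1) / 2 = r.val := by omega
    have hmod : (2 * r.val + 1) % 2 = 1 := by omega
    rw [hdiv, hmod, hfeq _ r.isLt]



theorem main_pattern {M : Type w} [L.Structure M]
    (m : ℕ) (φ₀ φ₁ : L.Formula (Fin 1 ⊕ Fin m)) (a b : ℕ → Fin m → M)
    (hmut : MutuallyIndiscernible (L := L) a b)
    (hreal : ∃ x : M, Real1 φ₀ x (a 0) ∧ ¬ Real1 φ₀ x (a 1) ∧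
      Real1 φ₁ x (b 0) ∧ ¬ Real1 φ₁ x (b 1)) :
    IsICTPattern (pairFormula φ₀) (pairFormula φ₁)
      (fun l => Fin.append (a (2 * l)) (a (2 * l + 1)))
      (fun l => Fin.append (b (2 * l)) (b (2 * l + 1))) := by
  intro i j s
  classical
  -- a-side index data
  obtain ⟨tA, hcardA⟩ : ∃ tt, (insert i s).card = tt + 1 :=
    ⟨(insert i s).card - 1, by
      have : 0 < (insert i s).card := Finset.card_pos.mpr ⟨i, Finset.mem_insert_self i s⟩
      omega⟩
  obtain ⟨uA, hmonoA, hULA, hURA⟩ := mkU (insert i s) hcardA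
  set rA : Fin (tA + 1) := ((insert i s).orderIsoOfFin hcardA).symm
    ⟨i, Finset.mem_insert_self i s⟩ with hrA
  -- b-side index data
  obtain ⟨tB, hcardB⟩ : ∃ tt, (insert j s).card = tt + 1 :=
    ⟨(insert j s).card - 1, by
      have : 0 < (insert j s).card := Finset.card_pos.mpr ⟨j, Finset.mem_insert_self j s⟩
      omega⟩
  obtain ⟨uB, hmonoB, hULB, hURB⟩ := mkU (insert j s) hcardB
  set rB : Fin (tB + 1) := ((insert j s).orderIsoOfFin hcardB).symm
    ⟨j, Finset.mem_insert_self j s⟩ with hrB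
  -- pass 1 : a-side pattern, with φ₁-alternation at b₀ b₁ as parameters
  set c₁ : Fin (m + m) → M := Fin.append (b 0) (b 1) with hc₁def
  have e1 : (fun y => c₁ (Fin.castAdd m y)) = b 0 := funext fun y => Fin.append_left _ _ y
  have e2 : (fun y => c₁ (Fin.natAdd m y)) = b 1 := funext fun y => Fin.append_right _ _ y
  have hc₁ : ∀ z, c₁ z ∈ ⋃ j', Set.range (b j') := by
    intro z
    induction z using Fin.addCases with
    | left y =>
      have : c₁ (Fin.castAdd m y) = b 0 y := Fin.append_left _ _ y
      rw [this]
      exact Set.mem_iUnion.mpr ⟨0, Set.mem_range_self y⟩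
    | right y =>
      have : c₁ (Fin.natAdd m y) = b 1 y := Fin.append_right _ _ y
      rw [this]
      exact Set.mem_iUnion.mpr ⟨1, Set.mem_range_self y⟩
  have hbase₁ : ∃ x, Real1 φ₀ x (a 0) ∧ ¬ Real1 φ₀ x (a 1) ∧
      (pairP φ₁).Realize c₁ (fun _ => x) := by
    obtain ⟨x, h1, h2, h3, h4⟩ := hreal
    refine ⟨x, h1, h2, ?_⟩
    rw [realize_pairP, e1, e2]
    exact ⟨h3, h4⟩
  obtain ⟨x₁, hx₁⟩ := pat_exists hmut.1 hc₁ hbase₁ tA rA uA hmonoA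
  -- pass 2 : b-side pattern, with the full a-side pattern as parameters
  set c₂ : Fin ((2 * tA + 2) * m) → M :=
    fun z => a (uA (finProdFinEquiv.symm z).1) ((finProdFinEquiv.symm z).2) with hc₂def
  have hc₂ : ∀ z, c₂ z ∈ ⋃ i', Set.range (a i') :=
    fun z => Set.mem_iUnion.mpr ⟨_, Set.mem_range_self _⟩
  have hceq : (fun (p : Fin (2 * tA + 2)) (y : Fin m) => c₂ (finProdFinEquiv (p, y))) =
      (fun p => a (uA p)) := by
    funext p y
    show a (uA (finProdFinEquiv.symm (finProdFinEquiv (p, y))).1)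
      ((finProdFinEquiv.symm (finProdFinEquiv (p, y))).2) = _
    rw [Equiv.symm_apply_apply]
  have hbase₂ : ∃ x, Real1 φ₁ x (b 0) ∧ ¬ Real1 φ₁ x (b 1) ∧
      (sideF φ₀ tA rA).Realize c₂ (fun _ => x) := by
    have h3 := hx₁.2
    rw [realize_pairP, e1, e2] at h3
    refine ⟨x₁, h3.1, h3.2, ?_⟩
    rw [realize_sideF, hceq]
    exact hx₁.1
  obtain ⟨x₂, hx₂⟩ := pat_exists hmut.2 hc₂ hbase₂ tB rB uB hmonoB
  have hb : PatOn φ₁ tB rB (fun p => b (uB p)) x₂ := hx₂.1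
  have ha : PatOn φ₀ tA rA (fun p => a (uA p)) x₂ := by
    have h4 := hx₂.2
    rw [realize_sideF, hceq] at h4
    exact h4
  -- assemble the ICT instance
  have eLA : uA (pIdxL rA) = 2 * i := by
    rw [hULA rA, hrA, OrderIso.apply_symm_apply]
  have eRA : uA (pIdxR rA) = 2 * i + 1 := by
    rw [hURA rA, hrA, OrderIso.apply_symm_apply]
  have eLB : uB (pIdxL rB) = 2 * j := by
    rw [hULB rB, hrB, OrderIso.apply_symm_apply]
  have eRB : uB (pIdxR rB) = 2 * j + 1 := by
    rw [hURB rB, hrB, OrderIso.apply_symm_apply]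
  refine ⟨x₂, ?_, ?_, ?_, ?_⟩
  · rw [real1_pairFormula]
    exact ⟨by simpa only [eLA] using ha.1, by simpa only [eRA] using ha.2.1⟩
  · rw [real1_pairFormula]
    exact ⟨by simpa only [eLB] using hb.1, by simpa only [eRB] using hb.2.1⟩
  · intro l hl hli
    rw [real1_pairFormula]
    have hne : ((insert i s).orderIsoOfFin hcardA).symm
        ⟨l, Finset.mem_insert_of_mem hl⟩ ≠ rA := by
      rw [hrA]
      intro hh
      apply hli
      have h2 := congrArg
        (fun z => ((((insert i s).orderIsoOfFin hcardA) z).val)) hh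
      simpa using h2
    have hiff := ha.2.2 _ hne
    have eL : uA (pIdxL (((insert i s).orderIsoOfFin hcardA).symm
        ⟨l, Finset.mem_insert_of_mem hl⟩)) = 2 * l := by
      rw [hULA, OrderIso.apply_symm_apply]
    have eR : uA (pIdxR (((insert i s).orderIsoOfFin hcardA).symm
        ⟨l, Finset.mem_insert_of_mem hl⟩)) = 2 * l + 1 := by
      rw [hURA, OrderIso.apply_symm_apply]
    have hiff' : Real1 φ₀ x₂ (a (2 * l)) ↔ Real1 φ₀ x₂ (a (2 * l + 1)) := by
      simpa only [eL, eR] using hiff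
    tauto
  · intro kk hk hkj
    rw [real1_pairFormula]
    have hne : ((insert j s).orderIsoOfFin hcardB).symm
        ⟨kk, Finset.mem_insert_of_mem hk⟩ ≠ rB := by
      rw [hrB]
      intro hh
      apply hkj
      have h2 := congrArg
        (fun z => ((((insert j s).orderIsoOfFin hcardB) z).val)) hh
      simpa using h2
    have hiff := hb.2.2 _ hne
    have eL : uB (pIdxL (((insert j s).orderIsoOfFin hcardB).symm
        ⟨kk, Finset.mem_insert_of_mem hk⟩)) = 2 * kk := by
      rw [hULB, OrderIso.apply_symm_apply]
    have eR : uB (pIdxR (((insert j s).orderIsoOfFin hcardB).symm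
        ⟨kk, Finset.mem_insert_of_mem hk⟩)) = 2 * kk + 1 := by
      rw [hURB, OrderIso.apply_symm_apply]
    have hiff' : Real1 φ₁ x₂ (b (2 * kk)) ↔ Real1 φ₁ x₂ (b (2 * kk + 1)) := by
      simpa only [eL, eR] using hiff
    tauto

end Aux

/-- If in some model of `T` there are mutually indiscernible sequences `(āᵢ)` and `(b̄ᵢ)` and an
element realizing `φ₀(x,ā₀) ∧ ¬φ₀(x,ā₁) ∧ φ₁(x,b̄₀) ∧ ¬φ₁(x,b̄₁)`, then `T` is not dp-minimal. -/
theorem not_dpMinimal_of_config {L : FirstOrder.Language.{u, v}}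
    (T : L.Theory) (hT : T.IsComplete)
    (M : Type w) [L.Structure M] [Nonempty M] (hM : M ⊨ T)
    (m : ℕ) (φ₀ φ₁ : L.Formula (Fin 1 ⊕ Fin m)) (a b : ℕ → Fin m → M)
    (hmut : MutuallyIndiscernible (L := L) a b)
    (hreal : ∃ x : M, Real1 φ₀ x (a 0) ∧ ¬ Real1 φ₀ x (a 1) ∧
      Real1 φ₁ x (b 0) ∧ ¬ Real1 φ₁ x (b 1)) :
    ¬ IsDpMinimal.{u, v, w} T := by
  intro hdp
  exact hdp M hM ⟨m + m, pairFormula φ₀, pairFormula φ₁,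
    (fun l => Fin.append (a (2 * l)) (a (2 * l + 1))),
    (fun l => Fin.append (b (2 * l)) (b (2 * l + 1))),
    main_pattern m φ₀ φ₁ a b hmut hreal⟩

end DpMin
end

section
/- Let T be a complete L-theory and N ≥ 1. The following are equivalent: (1) there exist a model M of T, L-formulas φ₁(x̄,ȳ),…,φ_N(x̄,ȳ), and sequences (āⁱⱼ)_{j∈ℕ} of ȳ-tuples from M for 1 ≤ i ≤ N such that for every function η : {1,…,N} → ℕ the set of formulas {φᵢ(x̄,āⁱ_{η(i)}) : 1 ≤ i ≤ N} ∪ {¬φᵢ(x̄,āⁱⱼ) : 1 ≤ i ≤ N, j ≠ η(i)} is consistent (every finite subset is realized by an |x̄|-tuple of M); (2) there exist a model M of T, L-formulas ψ₁(x̄,ȳ),…,ψ_N(x̄,ȳ), and sequences (āⁱⱼ)_{j∈ℕ} for 1 ≤ i ≤ N that are mutually indiscernible (each sequence is indiscernible over the union of the ranges of all the others) such that the formula ⋀_{1≤i≤N} ψᵢ(x̄,āⁱ₀) ∧ ⋀_{1≤i≤N} ¬ψᵢ(x̄,āⁱ₁) is realized by an |x̄|-tuple of M. -/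
open FirstOrder Language Set

universe u v w

namespace DpMin

/-- An ICT pattern of depth `N` in `n` object variables: for every `η : Fin N → ℕ` the set
`{φₖ(x̄,āᵏ_{η k})} ∪ {¬φₖ(x̄,āᵏₜ) : t ≠ η k}` is consistent (every finite subset is realized). -/
def IsICTPatternDepth {L : FirstOrder.Language.{u, v}} {M : Type w} [L.Structure M]
    (n : ℕ) {N m : ℕ}
    (φ : Fin N → L.Formula (Fin n ⊕ Fin m)) (a : Fin N → ℕ → Fin m → M) : Prop :=
  ∀ (η : Fin N → ℕ) (s : Finset (Fin N × ℕ)), ∃ x : Fin n → M,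
    (∀ i : Fin N, (φ i).Realize (Sum.elim x (a i (η i)))) ∧
    ∀ p ∈ s, p.2 ≠ η p.1 → ¬ (φ p.1).Realize (Sum.elim x (a p.1 p.2))

/-- A family of sequences is mutually indiscernible if each sequence is indiscernible over the
union of the ranges of all the others. -/
def MutuallyIndiscernibleFamily {L : FirstOrder.Language.{u, v}} {M : Type w} [L.Structure M]
    {N m : ℕ} (a : Fin N → ℕ → Fin m → M) : Prop :=
  ∀ i : Fin N, IndiscernibleOver (L := L) (a i)
    (⋃ (j : Fin N) (_ : j ≠ i) (k : ℕ), Set.range (a j k))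

end DpMin


namespace DpMin


/-- `g` is homogeneous for the colouring `P` of increasing `n`-tuples. -/
def Homog {n : ℕ} (P : (Fin n → ℕ) → Prop) (g : ℕ → ℕ) : Prop :=
  ∀ s t : Fin n → ℕ, StrictMono s → StrictMono t → (P (g ∘ s) ↔ P (g ∘ t))

lemma Homog.comp {n : ℕ} {P : (Fin n → ℕ) → Prop} {g h : ℕ → ℕ}
    (hg : Homog P g) (hh : StrictMono h) : Homog P (g ∘ h) := by
  intro s t hs ht
  exact hg (h ∘ s) (h ∘ t) (hh.comp hs) (hh.comp ht)

/-- Infinite Ramsey theorem, in homogeneous-subsequence form. -/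
theorem ramsey : ∀ (n : ℕ) (P : (Fin n → ℕ) → Prop),
    ∃ g : ℕ → ℕ, StrictMono g ∧ Homog P g := by
  intro n
  induction n with
  | zero =>
    intro P
    exact ⟨id, strictMono_id, fun s t _ _ => by rw [Subsingleton.elim s t]⟩
  | succ n IH =>
    intro P
    classical
    -- the derived colouring of `n`-tuples relative to a current subsequence `g`
    let Q : (ℕ → ℕ) → (Fin n → ℕ) → Prop := fun g s =>
      P (Fin.cases (g 0) (fun p => g (s p + 1)))
    let h : (ℕ → ℕ) → (ℕ → ℕ) := fun g => (IH (Q g)).choose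
    have hh : ∀ g, StrictMono (h g) ∧ Homog (Q g) (h g) := fun g => (IH (Q g)).choose_spec
    let G : ℕ → (ℕ → ℕ) := fun k => Nat.rec id (fun _ g => g ∘ Nat.succ ∘ h g) k
    have hG : ∀ k, StrictMono (G k) := by
      intro k
      induction k with
      | zero => exact strictMono_id
      | succ k ih =>
        have h1 : StrictMono (Nat.succ ∘ h (G k)) :=
          fun a b hab => Nat.succ_lt_succ ((hh (G k)).1 hab)
        exact ih.comp h1
    have hGsucc : ∀ k, G (k + 1) = (G k) ∘ Nat.succ ∘ h (G k) := fun k => rfl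
    -- nested ranges
    have hrange : ∀ j k, j ≤ k → ∀ x, ∃ y, G k x = G j y := by
      intro j k hjk
      induction k with
      | zero =>
        intro x
        exact ⟨x, by cases Nat.le_zero.1 hjk; rfl⟩
      | succ k ih =>
        intro x
        rcases Nat.lt_or_ge j (k+1) with hj | hj
        · obtain ⟨y, hy⟩ := ih (Nat.lt_succ_iff.1 hj) (Nat.succ (h (G k) x))
          exact ⟨y, hy⟩
        · have : j = k + 1 := le_antisymm hjk hj
          exact ⟨x, by rw [this]⟩
    let a : ℕ → ℕ := fun k => G k 0
    have ha : StrictMono a := by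
      apply strictMono_nat_of_lt_succ
      intro k
      have : a (k+1) = G k (h (G k) 0 + 1) := rfl
      rw [this]
      exact hG k (Nat.succ_pos _)
    -- the homogeneous value above `a k`
    let v : ℕ → Prop := fun k => P (Fin.cases (a k) (fun p => G (k+1) (p : ℕ)))
    have key : ∀ k (u : Fin n → ℕ), StrictMono u →
        (P (Fin.cases (a k) (fun p => G (k+1) (u p))) ↔ v k) := by
      intro k u hu
      have e1 : ∀ (w : Fin n → ℕ), (Fin.cases (a k) (fun p => G (k+1) (w p)) : Fin (n+1) → ℕ)
          = Fin.cases (G k 0) (fun p => G k ((h (G k) ∘ w) p + 1)) := by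
        intro w
        funext p
        refine Fin.cases ?_ (fun q => ?_) p
        · rfl
        · simp only [Fin.cases_succ]
          rfl
      have h2 := (hh (G k)).2 u (fun p => (p : ℕ)) hu (fun p q hpq => hpq)
      show P (Fin.cases (a k) (fun p => G (k+1) (u p))) ↔
        P (Fin.cases (a k) (fun p => G (k+1) ((p : Fin n) : ℕ)))
      rw [e1 u, e1 (fun p => (p : ℕ))]
      exact h2
    -- pigeonhole on the values `v k`
    obtain ⟨gK, hgK⟩ := Nat.exists_subseq_of_forall_mem_union (s := {p : Prop | p})
      (t := {p : Prop | ¬ p}) v (fun k => by by_cases h : v k <;> simp [h])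
    have hvconst : ∀ j j', v (gK j) ↔ v (gK j') := by
      rcases hgK with h | h
      · intro j j'; simp only [Set.mem_setOf_eq] at h; exact iff_of_true (h j) (h j')
      · intro j j'; simp only [Set.mem_setOf_eq] at h; exact iff_of_false (h j) (h j')
    refine ⟨a ∘ gK, ha.comp gK.strictMono, ?_⟩
    have sub : ∀ c : Fin (n+1) → ℕ, StrictMono c → (P (a ∘ c) ↔ v (c 0)) := by
      intro c hc
      have hy : ∀ p : Fin n, ∃ y, G (c 0 + 1) y = a (c p.succ) := by
        intro p
        have hlt : c 0 + 1 ≤ c p.succ := Nat.succ_le_of_lt (hc (Fin.succ_pos p))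
        obtain ⟨y, hy⟩ := hrange (c 0 + 1) (c p.succ) hlt 0
        exact ⟨y, hy.symm⟩
      choose y hy' using hy
      have hymono : StrictMono y := by
        intro p q hpq
        have : a (c p.succ) < a (c q.succ) := ha (hc (Fin.succ_lt_succ_iff.2 hpq))
        rw [← hy' p, ← hy' q] at this
        exact (hG (c 0 + 1)).lt_iff_lt.1 this
      have e2 : (a ∘ c : Fin (n+1) → ℕ) = Fin.cases (a (c 0)) (fun p => G (c 0 + 1) (y p)) := by
        funext p
        refine Fin.cases ?_ (fun q => ?_) p
        · rfl
        · simp only [Fin.cases_succ, Function.comp_apply]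
          exact (hy' q).symm
      rw [e2]
      exact key (c 0) y hymono
    intro s t hs ht
    rw [show ((a ∘ gK) ∘ s) = a ∘ (gK ∘ s) from rfl, show ((a ∘ gK) ∘ t) = a ∘ (gK ∘ t) from rfl,
      sub (gK ∘ s) (gK.strictMono.comp hs), sub (gK ∘ t) (gK.strictMono.comp ht)]
    exact hvconst _ _

/-- The type of semantic Ramsey requirements. -/
def Req : Type := Σ n : ℕ, ((Fin n → ℕ) → Prop)

theorem multiRamsey (F : Finset Req) :
    ∃ g : ℕ → ℕ, StrictMono g ∧ ∀ r ∈ F, Homog r.2 g := by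
  classical
  induction F using Finset.induction_on with
  | empty => exact ⟨id, strictMono_id, fun r hr => absurd hr (Finset.notMem_empty r)⟩
  | @insert r F hr ih =>
    obtain ⟨g, hg, hgF⟩ := ih
    obtain ⟨h, hh, hhom⟩ := ramsey r.1 (fun s => r.2 (g ∘ s))
    refine ⟨g ∘ h, hg.comp hh, ?_⟩
    intro r' hr'
    rcases Finset.mem_insert.1 hr' with rfl | hr'
    · intro s t hs ht
      exact hhom s t hs ht
    · exact (hgF r' hr').comp hh


variable {L : FirstOrder.Language.{u, v}}

def IndAt {M : Type w} [L.Structure M] {N m : ℕ} (a : Fin N → ℕ → Fin m → M) (i : Fin N) : Prop :=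
  IndiscernibleOver (L := L) (a i) (⋃ (j : Fin N) (_ : j ≠ i) (k : ℕ), Set.range (a j k))

lemma pat_reindex {M : Type w} [L.Structure M] {N n m : ℕ}
    {φ : Fin N → L.Formula (Fin n ⊕ Fin m)} {a : Fin N → ℕ → Fin m → M}
    (h : IsICTPatternDepth (L := L) n φ a) (i : Fin N) (g : ℕ → ℕ)
    (hg : Function.Injective g) :
    IsICTPatternDepth (L := L) n φ (fun j => if j = i then (fun k => a i (g k)) else a j) := by
  classical
  intro η s
  obtain ⟨x, hx1, hx2⟩ := h (fun j => if j = i then g (η i) else η j)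
    (s.image (fun p => if p.1 = i then (p.1, g p.2) else p))
  refine ⟨x, ?_, ?_⟩
  · intro j
    by_cases hj : j = i
    · subst hj
      have h1 := hx1 j
      rw [if_pos rfl] at h1
      dsimp only
      rw [if_pos rfl]
      exact h1
    · have h1 := hx1 j
      rw [if_neg hj] at h1
      dsimp only
      rw [if_neg hj]
      exact h1
  · intro p hp hpη
    by_cases hp1 : p.1 = i
    · have hmem : (p.1, g p.2) ∈ s.image (fun p => if p.1 = i then (p.1, g p.2) else p) :=
        Finset.mem_image.2 ⟨p, hp, by rw [if_pos hp1]⟩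
      have hne : ((p.1, g p.2) : Fin N × ℕ).2 ≠
          (if ((p.1, g p.2) : Fin N × ℕ).1 = i then g (η i) else η ((p.1, g p.2) : Fin N × ℕ).1) := by
        show g p.2 ≠ (if p.1 = i then g (η i) else η p.1)
        rw [if_pos hp1]
        intro hgg
        apply hpη
        rw [hp1]
        exact hg hgg
      have h2 := hx2 _ hmem hne
      dsimp only
      rw [if_pos hp1]
      rw [hp1] at h2 ⊢
      exact h2
    · have hmem : p ∈ s.image (fun p => if p.1 = i then (p.1, g p.2) else p) :=
        Finset.mem_image.2 ⟨p, hp, by rw [if_neg hp1]⟩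
      have hne : p.2 ≠ (if p.1 = i then g (η i) else η p.1) := by
        rw [if_neg hp1]
        exact hpη
      have h2 := hx2 _ hmem hne
      dsimp only
      rw [if_neg hp1]
      exact h2

section Step

variable {T : L.Theory}

lemma step (M : Theory.ModelType.{u, v, w} T) {N n m : ℕ}
    (φ : Fin N → L.Formula (Fin n ⊕ Fin m)) (i : Fin N)
    (a : Fin N → ℕ → Fin m → M)
    (hPat : IsICTPatternDepth (L := L) n φ a)
    (hInd : ∀ j : Fin N, j < i → IndAt (L := L) a j) :
    ∃ (M' : Theory.ModelType.{u, v, w} T) (a' : Fin N → ℕ → Fin m → M'),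
      IsICTPatternDepth (L := L) n φ a' ∧ ∀ j : Fin N, j ≤ i → IndAt (L := L) a' j := by
  classical
  haveI : Nonempty (Finset Req) := ⟨∅⟩
  set U : Ultrafilter (Finset Req) := Ultrafilter.of Filter.atTop with hUdef
  have hU : ∀ r : Req, ∀ᶠ F in (U : Filter (Finset Req)), r ∈ F := by
    intro r
    have h1 : ∀ᶠ F in (Filter.atTop : Filter (Finset Req)), r ∈ F :=
      Filter.eventually_atTop.2 ⟨{r}, fun F hF => hF (Finset.mem_singleton_self r)⟩
    exact h1.filter_mono (Ultrafilter.of_le _)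
  set g : Finset Req → ℕ → ℕ := fun F => (multiRamsey F).choose with hgdef
  have hg : ∀ F, StrictMono (g F) ∧ ∀ r ∈ F, Homog r.2 (g F) :=
    fun F => (multiRamsey F).choose_spec
  -- the reindexed component families
  set cmp : Finset Req → Fin N → ℕ → Fin m → (M : Type w) :=
    fun F j => if j = i then (fun k => a i (g F k)) else a j with hcmpdef
  have hcmp_i : ∀ F k, cmp F i k = a i (g F k) := by
    intro F k
    simp [hcmpdef]
  have hcmp_ne : ∀ F j, j ≠ i → cmp F j = a j := by
    intro F j hj
    simp [hcmpdef, hj]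
  have hsub : ∀ F, IsICTPatternDepth (L := L) n φ (cmp F) := by
    intro F
    have := pat_reindex (L := L) hPat i (g F) (hg F).1.injective
    rw [hcmpdef]
    exact this
  -- the ultrapower model
  have hTmod : ((U : Filter (Finset Req)).Product (fun _ => (M : Type w))) ⊨ T := by
    refine (Theory.model_iff T).2 (fun σ hσ => ?_)
    exact (Ultraproduct.sentence_realize σ).2
      (Filter.Eventually.of_forall (fun F => M.is_model.realize_of_mem σ hσ))
  haveI : ((U : Filter (Finset Req)).Product (fun _ => (M : Type w))) ⊨ T := hTmod
  refine ⟨⟨(U : Filter (Finset Req)).Product (fun _ => (M : Type w))⟩,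
    fun j k l => (↑(fun F => cmp F j k l) : (U : Filter (Finset Req)).Product (fun _ => (M : Type w))), ?_, ?_⟩
  · -- the pattern is preserved
    intro η s
    refine ⟨fun q => (↑(fun F => ((hsub F) η s).choose q) :
      (U : Filter (Finset Req)).Product (fun _ => (M : Type w))), ?_, ?_⟩
    · intro i'
      have heq : (Sum.elim (fun q => (↑(fun F => ((hsub F) η s).choose q) :
          (U : Filter (Finset Req)).Product (fun _ => (M : Type w))))
            (fun l => (↑(fun F => cmp F i' (η i') l) : (U : Filter (Finset Req)).Product (fun _ => (M : Type w)))) :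
            (Fin n ⊕ Fin m) → _) =
          fun b => (↑(fun F => Sum.elim (((hsub F) η s).choose) (cmp F i' (η i')) b) :
            (U : Filter (Finset Req)).Product (fun _ => (M : Type w))) := by
        funext b
        rcases b with q | l <;> rfl
      beta_reduce
      erw [heq]
      exact (Ultraproduct.realize_formula_cast (φ i') _).2
        (Filter.Eventually.of_forall (fun F => ((hsub F) η s).choose_spec.1 i'))
    · intro p hp hne
      have heq : (Sum.elim (fun q => (↑(fun F => ((hsub F) η s).choose q) :
          (U : Filter (Finset Req)).Product (fun _ => (M : Type w))))
            (fun l => (↑(fun F => cmp F p.1 p.2 l) : (U : Filter (Finset Req)).Product (fun _ => (M : Type w)))) :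
            (Fin n ⊕ Fin m) → _) =
          fun b => (↑(fun F => Sum.elim (((hsub F) η s).choose) (cmp F p.1 p.2) b) :
            (U : Filter (Finset Req)).Product (fun _ => (M : Type w))) := by
        funext b
        rcases b with q | l <;> rfl
      beta_reduce
      erw [heq]
      intro hcon
      have h1 := (Ultraproduct.realize_formula_cast (φ p.1) _).1 hcon
      obtain ⟨F, h2, h3⟩ := (h1.and (Filter.Eventually.of_forall
        (fun F => ((hsub F) η s).choose_spec.2 p hp hne))).exists
      exact h3 h2
  · -- indiscernibility
    intro j hj
    intro n' k ψf c hc st st' hst hst' _ _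
    rcases eq_or_lt_of_le hj with heq | hlt
    · -- the freshly homogenized sequence
      subst heq
      have hcrep : ∀ t' : Fin k, ∃ d : (M : Type w),
          (c t' = (↑(fun _ : Finset Req => d) : (U : Filter (Finset Req)).Product (fun _ => (M : Type w)))) ∧
          d ∈ ⋃ (j' : Fin N) (_ : j' ≠ j) (k' : ℕ), Set.range (a j' k') := by
        intro t'
        have hmem := hc t'
        rw [Set.mem_iUnion] at hmem
        obtain ⟨j', hmem⟩ := hmem
        rw [Set.mem_iUnion] at hmem
        obtain ⟨hj', hmem⟩ := hmem
        rw [Set.mem_iUnion] at hmem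
        obtain ⟨k', l, hl⟩ := hmem
        refine ⟨a j' k' l, ?_, ?_⟩
        · rw [← hl]
          show ((fun F => cmp F j' k' l : ∀ _ : Finset Req, (M : Type w)) : (U : Filter (Finset Req)).Product (fun _ => (M : Type w))) =
            ((fun _ => a j' k' l : ∀ _ : Finset Req, (M : Type w)) : (U : Filter (Finset Req)).Product (fun _ => (M : Type w)))
          apply congrArg
          funext F
          rw [hcmp_ne F j' hj']
        · exact Set.mem_iUnion.2 ⟨j', Set.mem_iUnion.2 ⟨hj', Set.mem_iUnion.2 ⟨k', ⟨l, rfl⟩⟩⟩⟩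
      choose e he hemem using hcrep
      have heq2 : ∀ (wpos : Fin n' → ℕ),
          (Sum.elim (fun p : Fin n' × Fin m =>
            (↑(fun F => cmp F j (wpos p.1) p.2) : (U : Filter (Finset Req)).Product (fun _ => (M : Type w)))) c) =
          fun b => (↑(fun F => Sum.elim (fun p : Fin n' × Fin m => a j (g F (wpos p.1)) p.2) e b) :
            (U : Filter (Finset Req)).Product (fun _ => (M : Type w))) := by
        intro wpos
        funext b
        rcases b with p | t'
        · show ((fun F => cmp F j (wpos p.1) p.2 : ∀ _ : Finset Req, (M : Type w)) :
              (U : Filter (Finset Req)).Product (fun _ => (M : Type w))) =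
            ((fun F => a j (g F (wpos p.1)) p.2 : ∀ _ : Finset Req, (M : Type w)) : (U : Filter (Finset Req)).Product (fun _ => (M : Type w)))
          apply congrArg
          funext F
          rw [hcmp_i F (wpos p.1)]
        · exact he t'
      beta_reduce
      erw [heq2 st, heq2 st',
        Ultraproduct.realize_formula_cast ψf _, Ultraproduct.realize_formula_cast ψf _]
      apply Filter.eventually_congr
      have hreq := hU ⟨n', fun wpos => ψf.Realize
        (Sum.elim (fun p : Fin n' × Fin m => a j (wpos p.1) p.2) e)⟩
      filter_upwards [hreq] with F hF
      exact (hg F).2 _ hF st st' hst hst'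
    · -- previously treated sequences
      have hjne : j ≠ i := ne_of_lt hlt
      have hcrep : ∀ t' : Fin k, ∃ cc : Finset Req → (M : Type w),
          (c t' = (↑cc : (U : Filter (Finset Req)).Product (fun _ => (M : Type w)))) ∧
          ∀ F, cc F ∈ ⋃ (j' : Fin N) (_ : j' ≠ j) (k' : ℕ), Set.range (a j' k') := by
        intro t'
        have hmem := hc t'
        rw [Set.mem_iUnion] at hmem
        obtain ⟨j', hmem⟩ := hmem
        rw [Set.mem_iUnion] at hmem
        obtain ⟨hj', hmem⟩ := hmem
        rw [Set.mem_iUnion] at hmem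
        obtain ⟨k', l, hl⟩ := hmem
        refine ⟨fun F => cmp F j' k' l, hl.symm, ?_⟩
        intro F
        by_cases hji : j' = i
        · subst hji
          refine Set.mem_iUnion.2 ⟨j', Set.mem_iUnion.2 ⟨hj', Set.mem_iUnion.2
            ⟨g F k', ⟨l, ?_⟩⟩⟩⟩
          show a j' (g F k') l = cmp F j' k' l
          rw [hcmp_i F k']
        · refine Set.mem_iUnion.2 ⟨j', Set.mem_iUnion.2 ⟨hj', Set.mem_iUnion.2
            ⟨k', ⟨l, ?_⟩⟩⟩⟩
          show a j' k' l = cmp F j' k' l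
          rw [hcmp_ne F j' hji]
      choose cc hcc hccmem using hcrep
      have heq2 : ∀ (wpos : Fin n' → ℕ),
          (Sum.elim (fun p : Fin n' × Fin m =>
            (↑(fun F => cmp F j (wpos p.1) p.2) : (U : Filter (Finset Req)).Product (fun _ => (M : Type w)))) c) =
          fun b => (↑(fun F => Sum.elim (fun p : Fin n' × Fin m => a j (wpos p.1) p.2)
            (fun t' => cc t' F) b) : (U : Filter (Finset Req)).Product (fun _ => (M : Type w))) := by
        intro wpos
        funext b
        rcases b with p | t'
        · show ((fun F => cmp F j (wpos p.1) p.2 : ∀ _ : Finset Req, (M : Type w)) :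
              (U : Filter (Finset Req)).Product (fun _ => (M : Type w))) =
            ((fun F => a j (wpos p.1) p.2 : ∀ _ : Finset Req, (M : Type w)) : (U : Filter (Finset Req)).Product (fun _ => (M : Type w)))
          apply congrArg
          funext F
          rw [hcmp_ne F j hjne]
        · exact hcc t'
      beta_reduce
      erw [heq2 st, heq2 st',
        Ultraproduct.realize_formula_cast ψf _, Ultraproduct.realize_formula_cast ψf _]
      apply Filter.eventually_congr
      apply Filter.Eventually.of_forall
      intro F
      exact hInd j hlt n' k ψf (fun t' => cc t' F) (fun t' => hccmem t' F) st st' hst hst'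
        (fun _ => Set.mem_univ _) (fun _ => Set.mem_univ _)

lemma stepAll {N n m : ℕ} (φ : Fin N → L.Formula (Fin n ⊕ Fin m))
    (M : Theory.ModelType.{u, v, w} T) (a : Fin N → ℕ → Fin m → M)
    (hPat : IsICTPatternDepth (L := L) n φ a) :
    ∃ (M' : Theory.ModelType.{u, v, w} T) (a' : Fin N → ℕ → Fin m → M'),
      IsICTPatternDepth (L := L) n φ a' ∧ ∀ j : Fin N, IndAt (L := L) a' j := by
  suffices h : ∀ r : ℕ, ∃ (M' : Theory.ModelType.{u, v, w} T)
      (a' : Fin N → ℕ → Fin m → M'), IsICTPatternDepth (L := L) n φ a' ∧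
      ∀ j : Fin N, (j : ℕ) < r → IndAt (L := L) a' j by
    obtain ⟨M', a', h1, h2⟩ := h N
    exact ⟨M', a', h1, fun j => h2 j j.isLt⟩
  intro r
  induction r with
  | zero => exact ⟨M, a, hPat, fun j hj => absurd hj (Nat.not_lt_zero _)⟩
  | succ r ih =>
    obtain ⟨M', a', h1, h2⟩ := ih
    by_cases hr : r < N
    · obtain ⟨M'', a'', h1', h2'⟩ := step M' φ ⟨r, hr⟩ a' h1 (fun j hj => h2 j hj)
      refine ⟨M'', a'', h1', fun j hj => h2' j ?_⟩
      exact Nat.lt_succ_iff.1 hj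
    · refine ⟨M', a', h1, fun j hj => h2 j ?_⟩
      have := j.isLt
      omega

end Step

section Swap

variable {M : Type w} [L.Structure M] {N' K m : ℕ}

lemma swap_one (a : Fin (N' + 1) → ℕ → Fin m → M)
    (hMI : MutuallyIndiscernibleFamily (L := L) a) (i₀ : Fin (N' + 1))
    (Θ : L.Formula (Fin (N' + 1) × Fin K × Fin m))
    (u u' : Fin (N' + 1) → Fin K → ℕ)
    (hu : ∀ j, StrictMono (u j)) (hu' : ∀ j, StrictMono (u' j))
    (huu : ∀ j, j ≠ i₀ → u j = u' j) :
    (Θ.Realize (fun q => a q.1 (u q.1 q.2.1) q.2.2) ↔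
      Θ.Realize (fun q => a q.1 (u' q.1 q.2.1) q.2.2)) := by
  classical
  set E := finSuccEquiv' i₀ with hE
  set enc : (Fin N' × (Fin K × Fin m)) ≃ Fin (N' * (K * m)) :=
    (Equiv.prodCongr (Equiv.refl (Fin N')) finProdFinEquiv).trans finProdFinEquiv with henc
  set g : (Fin (N' + 1) × Fin K × Fin m) → ((Fin K × Fin m) ⊕ Fin (N' * (K * m))) :=
    fun q => match E q.1 with
      | none => Sum.inl q.2
      | some j' => Sum.inr (enc (j', q.2)) with hg
  set c : Fin (N' * (K * m)) → M :=
    fun t => a (E.symm (some (enc.symm t).1)) (u (E.symm (some (enc.symm t).1)) (enc.symm t).2.1)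
      (enc.symm t).2.2 with hc
  have hcmem : ∀ t, c t ∈ ⋃ (j : Fin (N' + 1)) (_ : j ≠ i₀) (k : ℕ), Set.range (a j k) := by
    intro t
    have hne : E.symm (some (enc.symm t).1) ≠ i₀ := by
      intro h
      have := (finSuccEquiv'_symm_none i₀) ▸ h
      exact Option.some_ne_none _ (E.symm.injective this)
    exact Set.mem_iUnion.2 ⟨_, Set.mem_iUnion.2 ⟨hne, Set.mem_iUnion.2 ⟨_, ⟨_, rfl⟩⟩⟩⟩
  have key := hMI i₀ K (N' * (K * m)) (Θ.relabel g) c hcmem (u i₀) (u' i₀) (hu i₀) (hu' i₀)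
    (fun _ => Set.mem_univ _) (fun _ => Set.mem_univ _)
  have conv : ∀ (w : Fin (N' + 1) → Fin K → ℕ), (∀ j, j ≠ i₀ → w j = u j) →
      ((Θ.relabel g).Realize (Sum.elim (fun p : Fin K × Fin m => a i₀ (w i₀ p.1) p.2) c) ↔
        Θ.Realize (fun q => a q.1 (w q.1 q.2.1) q.2.2)) := by
    intro w hw
    rw [Formula.realize_relabel]
    apply Iff.of_eq
    congr 1
    funext q
    rcases hEq : E q.1 with _ | j'
    · have hq1 : q.1 = i₀ := by
        have := congrArg E.symm hEq
        rw [Equiv.symm_apply_apply, finSuccEquiv'_symm_none] at this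
        exact this
      show (Sum.elim (fun p : Fin K × Fin m => a i₀ (w i₀ p.1) p.2) c) (g q) = _
      have : g q = Sum.inl q.2 := by simp only [hg, hEq]
      rw [this]
      simp only [Sum.elim_inl]
      rw [hq1]
    · have hq1 : E.symm (some j') = q.1 := by
        rw [← hEq, Equiv.symm_apply_apply]
      show (Sum.elim (fun p : Fin K × Fin m => a i₀ (w i₀ p.1) p.2) c) (g q) = _
      have : g q = Sum.inr (enc (j', q.2)) := by simp only [hg, hEq]
      rw [this]
      simp only [Sum.elim_inr, hc, Equiv.symm_apply_apply]
      have hne : E.symm (some j') ≠ i₀ := by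
        intro h
        have := (finSuccEquiv'_symm_none i₀) ▸ h
        exact Option.some_ne_none _ (E.symm.injective this)
      rw [hq1]
      have hne' : q.1 ≠ i₀ := hq1 ▸ hne
      rw [hw q.1 hne']
  rw [← conv u (fun j _ => rfl), ← conv u' (fun j hj => (huu j hj).symm)]
  exact key

lemma swap_all (a : Fin (N' + 1) → ℕ → Fin m → M)
    (hMI : MutuallyIndiscernibleFamily (L := L) a)
    (Θ : L.Formula (Fin (N' + 1) × Fin K × Fin m))
    (u u' : Fin (N' + 1) → Fin K → ℕ)
    (hu : ∀ j, StrictMono (u j)) (hu' : ∀ j, StrictMono (u' j)) :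
    (Θ.Realize (fun q => a q.1 (u q.1 q.2.1) q.2.2) ↔
      Θ.Realize (fun q => a q.1 (u' q.1 q.2.1) q.2.2)) := by
  classical
  let mix : ℕ → (Fin (N' + 1) → Fin K → ℕ) := fun r j => if (j : ℕ) < r then u' j else u j
  have hmix : ∀ r j, StrictMono (mix r j) := by
    intro r j
    by_cases h : (j : ℕ) < r <;> simp only [mix, h, if_true, if_false] <;>
      [exact hu' j; exact hu j]
  have main : ∀ r : ℕ, (Θ.Realize (fun q => a q.1 (u q.1 q.2.1) q.2.2) ↔
      Θ.Realize (fun q => a q.1 (mix r q.1 q.2.1) q.2.2)) := by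
    intro r
    induction r with
    | zero =>
      have : mix 0 = u := by
        funext j kk
        simp [mix]
      rw [this]
    | succ r ih =>
      rw [ih]
      rcases Nat.lt_or_ge r (N' + 1) with hr | hr
      · exact swap_one a hMI ⟨r, hr⟩ Θ (mix r) (mix (r + 1)) (hmix r) (hmix (r + 1))
          (fun j hj => by
            have hjr : (j : ℕ) ≠ r := fun h => hj (Fin.ext h)
            have : ((j : ℕ) < r) = ((j : ℕ) < r + 1) := by
              apply propext
              constructor
              · exact fun h => Nat.lt_succ_of_lt h
              · intro h
                exact Nat.lt_of_le_of_ne (Nat.lt_succ_iff.1 h) hjr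
            simp only [mix, this])
      · have : mix r = mix (r + 1) := by
          funext j kk
          have h1 : (j : ℕ) < r := lt_of_lt_of_le j.isLt hr
          simp [mix, h1, Nat.lt_succ_of_lt h1]
        rw [this]
  have hfin : mix (N' + 1) = u' := by
    funext j kk
    simp [mix, j.isLt]
  rw [main (N' + 1), hfin]

end Swap

section Backward

variable {M : Type w} [L.Structure M]

noncomputable def finInf {α β : Type*} {n : ℕ} (s : Finset β) (f : β → L.BoundedFormula α n) :
    L.BoundedFormula α n :=
  BoundedFormula.iInf (fun b : s => f b)

lemma formula_realize_iInf {α β : Type*} {M : Type w} [L.Structure M] (s : Finset β)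
    (f : β → L.Formula α) (v : α → M) :
    Formula.Realize (finInf s f) v ↔ ∀ b ∈ s, (f b).Realize v := by
  unfold finInf Formula.Realize
  rw [BoundedFormula.realize_iInf]
  exact ⟨fun h b hb => h ⟨b, hb⟩, fun h b => h b b.2⟩

noncomputable def iExsMap {α β γ : Type*} [Finite γ] (f : α → β ⊕ γ) (φ : L.Formula α) :
    L.Formula β :=
  Formula.iExs γ (φ.relabel f)

lemma realize_iExsMap {α β γ : Type*} {M : Type w} [L.Structure M] [Finite γ]
    (f : α → β ⊕ γ) (φ : L.Formula α) (v : β → M) :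
    (iExsMap f φ).Realize v ↔ ∃ i : γ → M, φ.Realize (fun a => Sum.elim v i (f a)) := by
  unfold iExsMap
  rw [Formula.realize_iExs]
  simp only [Formula.realize_relabel]
  exact Iff.rfl


lemma backward {N' n m : ℕ}
    (ψ : Fin (N' + 1) → L.Formula (Fin n ⊕ Fin m)) (a : Fin (N' + 1) → ℕ → Fin m → M)
    (hMI : MutuallyIndiscernibleFamily (L := L) a) (x₀ : Fin n → M)
    (hx₀ : ∀ i, (ψ i).Realize (Sum.elim x₀ (a i 0)) ∧ ¬ (ψ i).Realize (Sum.elim x₀ (a i 1))) :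
    ∃ (m' : ℕ) (θ : Fin (N' + 1) → L.Formula (Fin n ⊕ Fin m'))
      (b : Fin (N' + 1) → ℕ → Fin m' → M), IsICTPatternDepth (L := L) n θ b := by
  classical
  -- the pair formulas and pair sequences
  set θ : Fin (N' + 1) → L.Formula (Fin n ⊕ Fin (m + m)) := fun i =>
    ((ψ i).relabel (Sum.map id (Fin.castAdd m))) ⊓
      (((ψ i).relabel (Sum.map id (Fin.natAdd m))).not) with hθdef
  set b : Fin (N' + 1) → ℕ → Fin (m + m) → M := fun i j =>
    Fin.append (a i (2 * j)) (a i (2 * j + 1)) with hbdef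
  have hθ : ∀ (i : Fin (N' + 1)) (x : Fin n → M) (j : ℕ),
      (θ i).Realize (Sum.elim x (b i j)) ↔
        ((ψ i).Realize (Sum.elim x (a i (2 * j))) ∧
          ¬ (ψ i).Realize (Sum.elim x (a i (2 * j + 1)))) := by
    intro i x j
    rw [hθdef]
    rw [Formula.realize_inf, Formula.realize_not, Formula.realize_relabel,
      Formula.realize_relabel]
    have e1 : (Sum.elim x (b i j)) ∘ (Sum.map id (Fin.castAdd m)) = Sum.elim x (a i (2 * j)) := by
      funext z
      rcases z with q | l
      · rfl
      · simp [hbdef, Fin.append_left]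
    have e2 : (Sum.elim x (b i j)) ∘ (Sum.map id (Fin.natAdd m)) =
        Sum.elim x (a i (2 * j + 1)) := by
      funext z
      rcases z with q | l
      · rfl
      · show Fin.append (a i (2 * j)) (a i (2 * j + 1)) (Fin.natAdd m l) = a i (2 * j + 1) l
        exact Fin.append_right _ _ l
    rw [e1, e2]
  refine ⟨m + m, θ, b, ?_⟩
  intro η s
  -- size bound
  set nb : ℕ := max (s.sup Prod.snd) (Finset.univ.sup η) + 1 with hnb
  have hηlt : ∀ i, η i < nb := by
    intro i
    have := Finset.le_sup (f := η) (Finset.mem_univ i)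
    exact Nat.lt_succ_of_le (le_trans this (le_max_right _ _))
  have hslt : ∀ p ∈ s, p.2 < nb := by
    intro p hp
    have := Finset.le_sup (f := Prod.snd) hp
    exact Nat.lt_succ_of_le (le_trans this (le_max_left _ _))
  have hnb0 : 0 < 2 * nb := by omega
  -- index helper into `Fin (2 * nb)`
  set idx : ℕ → Fin (2 * nb) := fun q => ⟨q % (2 * nb), Nat.mod_lt _ hnb0⟩ with hidxdef
  have hidx : ∀ q, q < 2 * nb → ((idx q : ℕ) = q) := fun q hq => Nat.mod_eq_of_lt hq
  -- atom formulas
  set atv : Fin (N' + 1) → Fin (2 * nb) → L.Formula (Fin n ⊕ (Fin (N' + 1) × Fin (2 * nb) × Fin m)) :=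
    fun i kk => (ψ i).relabel (Sum.map id (fun l => (i, kk, l))) with hatvdef
  have hatv : ∀ (i : Fin (N' + 1)) (kk : Fin (2 * nb)) (x : Fin n → M)
      (val : (Fin (N' + 1) × Fin (2 * nb) × Fin m) → M),
      ((atv i kk).Realize (Sum.elim x val) ↔ (ψ i).Realize (Sum.elim x (fun l => val (i, kk, l)))) := by
    intro i kk x val
    rw [hatvdef]
    rw [Formula.realize_relabel]
    apply Iff.of_eq
    congr 1
    funext z
    rcases z with q | l <;> rfl
  -- the packaged pattern formula
  set cnj : Fin (N' + 1) → L.Formula (Fin n ⊕ (Fin (N' + 1) × Fin (2 * nb) × Fin m)) := fun i =>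
    (atv i (idx (2 * η i))) ⊓ ((atv i (idx (2 * η i + 1))).not) ⊓
      (finInf ((Finset.range nb).erase (η i))
        (fun t => ((atv i (idx (2 * t))) ⊓ ((atv i (idx (2 * t + 1))).not)).not)) with hcnjdef
  set Θpat : L.Formula (Fin (N' + 1) × Fin (2 * nb) × Fin m) :=
    iExsMap (Sum.elim Sum.inr Sum.inl) (finInf Finset.univ cnj) with hΘdef
  -- unpacking lemma
  have RL : ∀ (w : Fin (N' + 1) → Fin (2 * nb) → ℕ),
      (Θpat.Realize (fun q => a q.1 (w q.1 q.2.1) q.2.2) ↔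
        ∃ x : Fin n → M, ∀ i : Fin (N' + 1),
          ((ψ i).Realize (Sum.elim x (a i (w i (idx (2 * η i))))) ∧
            ¬ (ψ i).Realize (Sum.elim x (a i (w i (idx (2 * η i + 1)))))) ∧
          ∀ t ∈ (Finset.range nb).erase (η i),
            ¬ ((ψ i).Realize (Sum.elim x (a i (w i (idx (2 * t))))) ∧
              ¬ (ψ i).Realize (Sum.elim x (a i (w i (idx (2 * t + 1)))))) ) := by
    intro w
    rw [hΘdef, realize_iExsMap]
    apply exists_congr
    intro x
    have e3 : (fun z => Sum.elim (fun q : Fin (N' + 1) × Fin (2 * nb) × Fin m =>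
        a q.1 (w q.1 q.2.1) q.2.2) x ((Sum.elim Sum.inr Sum.inl : (Fin n ⊕ _) → _) z)) =
        Sum.elim x (fun q : Fin (N' + 1) × Fin (2 * nb) × Fin m => a q.1 (w q.1 q.2.1) q.2.2) := by
      funext z
      rcases z with q | l <;> rfl
    rw [e3, formula_realize_iInf]
    have huniv : ∀ (P : Fin (N' + 1) → Prop), (∀ i ∈ Finset.univ, P i) ↔ (∀ i, P i) := by
      intro P
      constructor
      · exact fun h i => h i (Finset.mem_univ i)
      · exact fun h i _ => h i
    rw [huniv]
    apply forall_congr'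
    intro i
    rw [hcnjdef]
    rw [Formula.realize_inf, Formula.realize_inf, Formula.realize_not, formula_realize_iInf]
    rw [hatv, hatv]
    constructor
    · rintro ⟨⟨h1, h2⟩, h3⟩
      refine ⟨⟨h1, h2⟩, ?_⟩
      intro t ht
      have := h3 t ht
      rw [Formula.realize_not, Formula.realize_inf, Formula.realize_not, hatv, hatv] at this
      exact this
    · rintro ⟨⟨h1, h2⟩, h3⟩
      refine ⟨⟨h1, h2⟩, ?_⟩
      intro t ht
      rw [Formula.realize_not, Formula.realize_inf, Formula.realize_not, hatv, hatv]
      exact h3 t ht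
  -- the witness-moving formula over two positions per sequence
  set atw : Fin (N' + 1) → Fin 2 → L.Formula (Fin n ⊕ (Fin (N' + 1) × Fin 2 × Fin m)) :=
    fun i kk => (ψ i).relabel (Sum.map id (fun l => (i, kk, l))) with hatwdef
  have hatw : ∀ (i : Fin (N' + 1)) (kk : Fin 2) (x : Fin n → M)
      (val : (Fin (N' + 1) × Fin 2 × Fin m) → M),
      ((atw i kk).Realize (Sum.elim x val) ↔
        (ψ i).Realize (Sum.elim x (fun l => val (i, kk, l)))) := by
    intro i kk x val
    rw [hatwdef]
    rw [Formula.realize_relabel]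
    apply Iff.of_eq
    congr 1
    funext z
    rcases z with q | l <;> rfl
  set Θwit : L.Formula (Fin (N' + 1) × Fin 2 × Fin m) :=
    iExsMap (Sum.elim Sum.inr Sum.inl)
      (finInf Finset.univ (fun i => (atw i 0) ⊓ ((atw i 1).not))) with hΘwdef
  have RLw : ∀ (w : Fin (N' + 1) → Fin 2 → ℕ),
      (Θwit.Realize (fun q => a q.1 (w q.1 q.2.1) q.2.2) ↔
        ∃ x : Fin n → M, ∀ i : Fin (N' + 1),
          (ψ i).Realize (Sum.elim x (a i (w i 0))) ∧
            ¬ (ψ i).Realize (Sum.elim x (a i (w i 1)))) := by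
    intro w
    rw [hΘwdef, realize_iExsMap]
    apply exists_congr
    intro x
    have e3 : (fun z => Sum.elim (fun q : Fin (N' + 1) × Fin 2 × Fin m =>
        a q.1 (w q.1 q.2.1) q.2.2) x ((Sum.elim Sum.inr Sum.inl : (Fin n ⊕ _) → _) z)) =
        Sum.elim x (fun q : Fin (N' + 1) × Fin 2 × Fin m => a q.1 (w q.1 q.2.1) q.2.2) := by
      funext z
      rcases z with q | l <;> rfl
    rw [e3, formula_realize_iInf]
    constructor
    · intro h i
      have := h i (Finset.mem_univ i)
      rw [Formula.realize_inf, Formula.realize_not, hatw, hatw] at this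
      exact this
    · intro h i _
      rw [Formula.realize_inf, Formula.realize_not, hatw, hatw]
      exact h i
  -- Step A: the witness statement holds at positions (0,1)
  have hA : Θwit.Realize (fun q => a q.1 ((q.2.1 : ℕ)) q.2.2) :=
    (RLw (fun _ kk => (kk : ℕ))).2 ⟨x₀, fun i => hx₀ i⟩
  -- Step B: move it to positions (3η, 3η+1)
  have hu0 : ∀ j : Fin (N' + 1), StrictMono (fun kk : Fin 2 => (kk : ℕ)) :=
    fun _ _ _ h => h
  have hu1 : ∀ j : Fin (N' + 1), StrictMono (fun kk : Fin 2 => 3 * η j + (kk : ℕ)) :=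
    fun j p q h => Nat.add_lt_add_left h _
  have hB := (swap_all (L := L) a hMI Θwit (fun _ kk => (kk : ℕ))
    (fun j kk => 3 * η j + (kk : ℕ)) hu0 hu1).1 hA
  obtain ⟨x', hx'⟩ := (RLw (fun j kk => 3 * η j + (kk : ℕ))).1 hB
  -- truth values of x' along the sequences
  set ε : Fin (N' + 1) → ℕ → Prop := fun i q => (ψ i).Realize (Sum.elim x' (a i q)) with hεdef
  have hx'' : ∀ i, ε i (3 * η i) ∧ ¬ ε i (3 * η i + 1) := by
    intro i
    have h := hx' i
    have hz : ((0 : Fin 2) : ℕ) = 0 := rfl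
    have ho : ((1 : Fin 2) : ℕ) = 1 := rfl
    rw [hz, ho, add_zero] at h
    exact h
  -- safe pairs
  set sh : Fin (N' + 1) → ℕ → ℕ :=
    fun i t => if (¬ ε i (3 * t) ∨ ε i (3 * t + 1)) then 0 else 1 with hshdef
  have hsh01 : ∀ i t, sh i t ≤ 1 := by
    intro i t
    simp only [hshdef]
    split <;> omega
  have hsafe : ∀ i t, ¬ (ε i (3 * t + sh i t) ∧ ¬ ε i (3 * t + 1 + sh i t)) := by
    intro i t
    by_cases hc : (¬ ε i (3 * t) ∨ ε i (3 * t + 1))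
    · have hss : sh i t = 0 := by simp only [hshdef]; rw [if_pos hc]
      rw [hss, add_zero, add_zero]
      rintro ⟨h1, h2⟩
      rcases hc with hc | hc
      · exact hc h1
      · exact h2 hc
    · have hss : sh i t = 1 := by simp only [hshdef]; rw [if_neg hc]
      push_neg at hc
      rw [hss]
      rintro ⟨h1, _⟩
      exact hc.2 h1
  set S : Fin (N' + 1) → ℕ → ℕ := fun i t => if t = η i then 0 else sh i t with hSdef
  have hS1 : ∀ i t, S i t ≤ 1 := by
    intro i t
    simp only [hSdef]
    split
    · omega
    · exact hsh01 i t
  set posf : Fin (N' + 1) → ℕ → ℕ := fun i q => 3 * (q / 2) + q % 2 + S i (q / 2) with hposdef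
  have hposmono : ∀ i, StrictMono (posf i) := by
    intro i
    apply strictMono_nat_of_lt_succ
    intro q
    simp only [hposdef]
    rcases Nat.even_or_odd q with ⟨t, ht⟩ | ⟨t, ht⟩
    · have e1 : (q + 1) / 2 = q / 2 := by omega
      have e2 : (q + 1) % 2 = 1 := by omega
      have e3 : q % 2 = 0 := by omega
      rw [e1, e2, e3]
      omega
    · have e1 : (q + 1) / 2 = q / 2 + 1 := by omega
      have e2 : (q + 1) % 2 = 0 := by omega
      have e3 : q % 2 = 1 := by omega
      have hb1 := hS1 i (q / 2)
      have hb2 := hS1 i (q / 2 + 1)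
      rw [e1, e2, e3]
      omega
  have hpos_eta0 : ∀ i, posf i (2 * η i) = 3 * η i := by
    intro i
    simp only [hposdef, hSdef]
    have e1 : 2 * η i / 2 = η i := by omega
    have e2 : 2 * η i % 2 = 0 := by omega
    rw [e1, e2, if_pos rfl]
    all_goals omega
  have hpos_eta1 : ∀ i, posf i (2 * η i + 1) = 3 * η i + 1 := by
    intro i
    simp only [hposdef, hSdef]
    have e1 : (2 * η i + 1) / 2 = η i := by omega
    have e2 : (2 * η i + 1) % 2 = 1 := by omega
    rw [e1, e2, if_pos rfl]
    all_goals omega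
  have hpos_t0 : ∀ i t, t ≠ η i → posf i (2 * t) = 3 * t + sh i t := by
    intro i t htne
    simp only [hposdef, hSdef]
    have e1 : 2 * t / 2 = t := by omega
    have e2 : 2 * t % 2 = 0 := by omega
    rw [e1, e2, if_neg htne]
    all_goals omega
  have hpos_t1 : ∀ i t, t ≠ η i → posf i (2 * t + 1) = 3 * t + 1 + sh i t := by
    intro i t htne
    simp only [hposdef, hSdef]
    have e1 : (2 * t + 1) / 2 = t := by omega
    have e2 : (2 * t + 1) % 2 = 1 := by omega
    rw [e1, e2, if_neg htne]
    all_goals omega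
  -- Step D: x' realizes the full pattern at the chosen positions
  have hu2 : ∀ j, StrictMono (fun kk : Fin (2 * nb) => posf j (kk : ℕ)) :=
    fun j => (hposmono j).comp (fun _ _ h => h)
  have hD : Θpat.Realize (fun q => a q.1 (posf q.1 ((q.2.1 : ℕ))) q.2.2) := by
    apply (RL (fun j kk => posf j (kk : ℕ))).2
    refine ⟨x', fun i => ⟨⟨?_, ?_⟩, ?_⟩⟩
    · have hv : ((idx (2 * η i) : Fin (2 * nb)) : ℕ) = 2 * η i :=
        hidx _ (by have := hηlt i; omega)
      rw [hv, hpos_eta0]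
      exact (hx'' i).1
    · have hv : ((idx (2 * η i + 1) : Fin (2 * nb)) : ℕ) = 2 * η i + 1 :=
        hidx _ (by have := hηlt i; omega)
      rw [hv, hpos_eta1]
      exact (hx'' i).2
    · intro t ht
      obtain ⟨htne, htr⟩ := Finset.mem_erase.1 ht
      have htlt : t < nb := Finset.mem_range.1 htr
      have hv0 : ((idx (2 * t) : Fin (2 * nb)) : ℕ) = 2 * t := hidx _ (by omega)
      have hv1 : ((idx (2 * t + 1) : Fin (2 * nb)) : ℕ) = 2 * t + 1 := hidx _ (by omega)
      rw [hv0, hv1, hpos_t0 i t htne, hpos_t1 i t htne]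
      exact hsafe i t
  -- Step E: move to the standard positions
  have hustd : ∀ j : Fin (N' + 1), StrictMono (fun kk : Fin (2 * nb) => (kk : ℕ)) :=
    fun _ _ _ h => h
  have hE := (swap_all (L := L) a hMI Θpat (fun j kk => posf j (kk : ℕ))
    (fun _ kk => (kk : ℕ)) hu2 hustd).1 hD
  obtain ⟨xs, hxs⟩ := (RL (fun _ kk => (kk : ℕ))).1 hE
  refine ⟨xs, ?_, ?_⟩
  · intro i
    rw [hθ]
    have hv0 : ((idx (2 * η i) : Fin (2 * nb)) : ℕ) = 2 * η i :=
      hidx _ (by have := hηlt i; omega)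
    have hv1 : ((idx (2 * η i + 1) : Fin (2 * nb)) : ℕ) = 2 * η i + 1 :=
      hidx _ (by have := hηlt i; omega)
    have h := (hxs i).1
    rw [hv0, hv1] at h
    exact h
  · intro p hp hpne
    rw [hθ]
    have hplt := hslt p hp
    have hv0 : ((idx (2 * p.2) : Fin (2 * nb)) : ℕ) = 2 * p.2 := hidx _ (by omega)
    have hv1 : ((idx (2 * p.2 + 1) : Fin (2 * nb)) : ℕ) = 2 * p.2 + 1 := hidx _ (by omega)
    have h := (hxs p.1).2 p.2 (Finset.mem_erase.2 ⟨hpne, Finset.mem_range.2 hplt⟩)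
    rw [hv0, hv1] at h
    exact h


end Backward

end DpMin

namespace DpMin

/-- Depth-`N` ICT patterns exist in some model of `T` iff they exist with mutually indiscernible
witnessing sequences, where only the first two instances of each formula need be decided. -/
theorem ict_depth_iff_mutually_indiscernible {L : FirstOrder.Language.{u, v}}
    (T : L.Theory) (hT : T.IsComplete) (N : ℕ) (hN : 1 ≤ N) :
    (∃ (M : FirstOrder.Language.Theory.ModelType.{u, v, w} T) (n m : ℕ) (φ : Fin N → L.Formula (Fin n ⊕ Fin m))
        (a : Fin N → ℕ → Fin m → M), IsICTPatternDepth (L := L) n φ a) ↔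
    (∃ (M : FirstOrder.Language.Theory.ModelType.{u, v, w} T) (n m : ℕ) (ψ : Fin N → L.Formula (Fin n ⊕ Fin m))
        (a : Fin N → ℕ → Fin m → M), MutuallyIndiscernibleFamily (L := L) a ∧
        ∃ x : Fin n → M, ∀ i : Fin N,
          (ψ i).Realize (Sum.elim x (a i 0)) ∧ ¬ (ψ i).Realize (Sum.elim x (a i 1))) := by
  constructor
  · rintro ⟨M, n, m, φ, a, hPat⟩
    obtain ⟨M', a', h1, h2⟩ := stepAll (L := L) φ M a hPat
    refine ⟨M', n, m, φ, a', h2, ?_⟩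
    obtain ⟨x, hx1, hx2⟩ := h1 (fun _ => 0) (Finset.univ.image (fun i : Fin N => (i, 1)))
    refine ⟨x, fun i => ⟨hx1 i, ?_⟩⟩
    exact hx2 (i, 1) (Finset.mem_image.2 ⟨i, Finset.mem_univ i, rfl⟩) one_ne_zero
  · intro h
    obtain ⟨N', rfl⟩ : ∃ N', N = N' + 1 := ⟨N - 1, by omega⟩
    obtain ⟨M, n, m, ψ, a, hMI, x₀, hx₀⟩ := h
    obtain ⟨m', θ, b, hpat⟩ := backward (L := L) ψ a hMI x₀ (fun i => hx₀ i)
    exact ⟨M, n, m', θ, b, hpat⟩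

end DpMin
end

section
/- Let T be a complete L-theory and suppose L-formulas φ(x,ȳ) and ψ(x,ȳ), together with sequences from a model of T, form an ICT pattern witnessing that T is not dp-minimal. If φ(x,ȳ) is logically equivalent to a disjunction φ₁(x,ȳ) ∨ … ∨ φₙ(x,ȳ), then for some l with 1 ≤ l ≤ n, the formulas φₗ(x,ȳ) and ψ(x,ȳ) (with suitable sequences of parameter tuples in some model of T) form an ICT pattern; in particular φₗ and ψ witness that T is not dp-minimal. -/
open FirstOrder Language Set

universe u v w

namespace DpMin

lemma column_refine {n : ℕ} (hn : 0 < n) (c : ℕ → ℕ → Fin n) :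
    ∀ (R t : ℕ) (C : Finset ℕ), n ^ R * t ≤ C.card →
      ∃ C' ⊆ C, t ≤ C'.card ∧ ∃ lf : ℕ → Fin n, ∀ r < R, ∀ j ∈ C', c r j = lf r := by
  intro R
  induction R with
  | zero =>
    intro t C h
    exact ⟨C, subset_rfl, by simpa using h, fun _ => ⟨0, hn⟩,
      fun r hr => absurd hr (Nat.not_lt_zero r)⟩
  | succ R ih =>
    intro t C h
    obtain ⟨C₁, hsub, hcard, lf, hlf⟩ := ih (n * t) C (by
      calc n ^ R * (n * t) = n ^ (R + 1) * t := by ring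
      _ ≤ C.card := h)
    obtain ⟨l, -, hl⟩ := Finset.exists_le_card_fiber_of_mul_le_card_of_maps_to
      (f := fun j => c R j) (s := C₁) (t := Finset.univ)
      (fun x _ => Finset.mem_univ _) ⟨⟨0, hn⟩, Finset.mem_univ _⟩
      (by simpa using hcard)
    refine ⟨C₁.filter (fun j => c R j = l), (Finset.filter_subset _ _).trans hsub, hl,
      Function.update lf R l, ?_⟩
    intro r hr j hj
    rcases Nat.lt_succ_iff_lt_or_eq.1 hr with h' | rfl
    · rw [Function.update_of_ne h'.ne]
      exact hlf r h' j (Finset.mem_of_mem_filter _ hj)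
    · rw [Function.update_self]
      exact (Finset.mem_filter.1 hj).2

lemma grid_ramsey {n : ℕ} (hn : 0 < n) (N : ℕ) :
    ∃ K : ℕ, ∀ c : ℕ → ℕ → Fin n, ∃ (u v : Fin N → ℕ) (l : Fin n),
      Function.Injective u ∧ Function.Injective v ∧
      (∀ p, u p < K) ∧ (∀ q, v q < K) ∧ ∀ p q, c (u p) (v q) = l := by
  classical
  set R := n * N with hR
  refine ⟨max R (n ^ R * N), fun c => ?_⟩
  obtain ⟨C', hsub, hcard, lf, hlf⟩ :=
    column_refine hn c R N (Finset.range (n ^ R * N)) (by simp)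
  obtain ⟨l, -, hl⟩ := Finset.exists_le_card_fiber_of_mul_le_card_of_maps_to
    (f := lf) (s := Finset.range R) (t := Finset.univ)
    (n := N) (fun x _ => Finset.mem_univ _) ⟨⟨0, hn⟩, Finset.mem_univ _⟩
    (by simp [hR, Nat.mul_comm])
  obtain ⟨I, hIsub, hIcard⟩ := Finset.exists_subset_card_eq hl
  obtain ⟨J, hJsub, hJcard⟩ := Finset.exists_subset_card_eq hcard
  refine ⟨fun p => (I.orderIsoOfFin hIcard p : ℕ), fun q => (J.orderIsoOfFin hJcard q : ℕ), l,
    ?_, ?_, ?_, ?_, ?_⟩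
  · exact fun p q h => (I.orderIsoOfFin hIcard).injective (Subtype.ext h)
  · exact fun p q h => (J.orderIsoOfFin hJcard).injective (Subtype.ext h)
  · intro p
    have := hIsub (I.orderIsoOfFin hIcard p).2
    have := Finset.mem_range.1 (Finset.mem_filter.1 this).1
    exact lt_of_lt_of_le this (le_max_left _ _)
  · intro q
    have := Finset.mem_range.1 (hsub (hJsub (J.orderIsoOfFin hJcard q).2))
    exact lt_of_lt_of_le this (le_max_right _ _)
  · intro p q
    have hp := hIsub (I.orderIsoOfFin hIcard p).2
    have hpr := Finset.mem_range.1 (Finset.mem_filter.1 hp).1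
    have hpl := (Finset.mem_filter.1 hp).2
    have hq := hJsub (J.orderIsoOfFin hJcard q).2
    rw [hlf _ hpr _ hq, hpl]

/-- The canonical map into an ultrapower (over `ℕ`, along the hyperfilter) of `M`. -/
noncomputable def mkProd {M : Type w} (f : ℕ → M) :
    ((Filter.hyperfilter ℕ : Ultrafilter ℕ) : Filter ℕ).Product (fun _ : ℕ => M) :=
  @Quotient.mk' _ (Filter.productSetoid ((Filter.hyperfilter ℕ : Ultrafilter ℕ) : Filter ℕ)
    (fun _ : ℕ => M)) f

/-- If `φ` and `ψ` witness (via an ICT pattern in some model of `T`) that `T` is not dp-minimal,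
and `φ` is logically equivalent to the disjunction `φ₁ ∨ … ∨ φₙ`, then for some `l` the formulas
`φₗ` and `ψ` witness that `T` is not dp-minimal. -/
theorem ict_of_disjunction {L : FirstOrder.Language.{u, v}}
    (T : L.Theory) (hT : T.IsComplete)
    (m : ℕ) (φ ψ : L.Formula (Fin 1 ⊕ Fin m))
    (M : FirstOrder.Language.Theory.ModelType.{u, v, w} T)
    (a b : ℕ → Fin m → M) (hICT : IsICTPattern φ ψ a b)
    (n : ℕ) (hn : 1 ≤ n) (φs : Fin n → L.Formula (Fin 1 ⊕ Fin m))
    (heq : ∀ (N : Type w) [L.Structure N] (v : Fin 1 ⊕ Fin m → N),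
      φ.Realize v ↔ ∃ l : Fin n, (φs l).Realize v) :
    ∃ (l : Fin n) (M' : FirstOrder.Language.Theory.ModelType.{u, v, w} T)
      (a' b' : ℕ → Fin m → M'),
      IsICTPattern (φs l) ψ a' b' := by
  classical
  have hn0 : 0 < n := hn
  -- Step 1: for each K, some disjunct admits a finite ICT pattern of size K in M.
  have step1 : ∀ K : ℕ, ∃ l : Fin n, ∃ A B : ℕ → Fin m → M,
      ∀ i < K, ∀ j < K, ∃ x : M, Real1 (φs l) x (A i) ∧ Real1 ψ x (B j) ∧
        (∀ k < K, k ≠ i → ¬ Real1 (φs l) x (A k)) ∧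
        (∀ k < K, k ≠ j → ¬ Real1 ψ x (B k)) := by
    intro K
    obtain ⟨KR, hKR⟩ := grid_ramsey hn0 K
    choose w hw1 hw2 hw3 hw4 using fun i j => hICT i j (Finset.range KR)
    have hcol : ∀ i j : ℕ, ∃ l : Fin n, Real1 (φs l) (w i j) (a i) := fun i j =>
      (heq M (Sum.elim (fun _ => w i j) (a i))).1 (hw1 i j)
    choose col hcol using hcol
    obtain ⟨uu, vv, l, huinj, hvinj, hub, hvb, hmono⟩ := hKR col
    refine ⟨l, fun i => if h : i < K then a (uu ⟨i, h⟩) else a 0,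
      fun j => if h : j < K then b (vv ⟨j, h⟩) else b 0, ?_⟩
    intro i hi j hj
    refine ⟨w (uu ⟨i, hi⟩) (vv ⟨j, hj⟩), ?_, ?_, ?_, ?_⟩
    · simp only [dif_pos hi]
      have h := hcol (uu ⟨i, hi⟩) (vv ⟨j, hj⟩)
      rwa [hmono ⟨i, hi⟩ ⟨j, hj⟩] at h
    · simp only [dif_pos hj]
      exact hw2 _ _
    · intro k hk hki
      simp only [dif_pos hk]
      intro hreal
      have hφ : Real1 φ (w (uu ⟨i, hi⟩) (vv ⟨j, hj⟩)) (a (uu ⟨k, hk⟩)) :=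
        (heq M (Sum.elim (fun _ => w (uu ⟨i, hi⟩) (vv ⟨j, hj⟩)) (a (uu ⟨k, hk⟩)))).2 ⟨l, hreal⟩
      refine hw3 _ _ (uu ⟨k, hk⟩) (Finset.mem_range.2 (hub _)) (fun e => hki ?_) hφ
      have := huinj e
      exact congrArg Fin.val this
    · intro k hk hkj
      simp only [dif_pos hk]
      refine hw4 _ _ (vv ⟨k, hk⟩) (Finset.mem_range.2 (hvb _)) (fun e => hkj ?_)
      have := hvinj e
      exact congrArg Fin.val this
  -- Step 2: pigeonhole over K.
  choose f Af Bf hP using step1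
  haveI : Nonempty (Fin n) := ⟨⟨0, hn0⟩⟩
  obtain ⟨l, hlinf⟩ := Finite.exists_infinite_fiber f
  have hinf : (f ⁻¹' {l}).Infinite := Set.infinite_coe_iff.1 hlinf
  have hP' : ∀ K : ℕ, ∃ A B : ℕ → Fin m → M,
      ∀ i < K, ∀ j < K, ∃ x : M, Real1 (φs l) x (A i) ∧ Real1 ψ x (B j) ∧
        (∀ k < K, k ≠ i → ¬ Real1 (φs l) x (A k)) ∧
        (∀ k < K, k ≠ j → ¬ Real1 ψ x (B k)) := by
    intro K
    obtain ⟨K', hK'mem, hKK'⟩ := hinf.exists_gt K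
    have hfK : f K' = l := hK'mem
    refine ⟨Af K', Bf K', fun i hi j hj => ?_⟩
    have h := hP K' i (hi.trans hKK') j (hj.trans hKK')
    rw [hfK] at h
    obtain ⟨x, h1, h2, h3, h4⟩ := h
    exact ⟨x, h1, h2, fun k hk => h3 k (hk.trans hKK'), fun k hk => h4 k (hk.trans hKK')⟩
  choose A B hAB using hP'
  have key : ∀ (K i j : ℕ), ∃ x : M, i < K → j < K →
      Real1 (φs l) x (A K i) ∧ Real1 ψ x (B K j) ∧
      (∀ k < K, k ≠ i → ¬ Real1 (φs l) x (A K k)) ∧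
      (∀ k < K, k ≠ j → ¬ Real1 ψ x (B K k)) := by
    intro K i j
    by_cases h : i < K ∧ j < K
    · exact (hAB K i h.1 j h.2).imp fun x hx _ _ => hx
    · exact ⟨Classical.arbitrary M, fun h1 h2 => absurd ⟨h1, h2⟩ h⟩
  choose W hW using key
  -- Step 3: pass to an ultrapower of M.
  haveI hmod : ((Filter.hyperfilter ℕ : Ultrafilter ℕ) : Filter ℕ).Product
      (fun _ : ℕ => (M : Type w)) ⊨ T := by
    rw [Theory.model_iff]
    intro σ hσ
    exact (Ultraproduct.sentence_realize σ).2
      (Filter.Eventually.of_forall fun N => T.realize_sentence_of_mem hσ)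
  have transfer : ∀ (θ : L.Formula (Fin 1 ⊕ Fin m)) (xf : ℕ → M) (pf : ℕ → Fin m → M),
      Real1 θ (mkProd xf) (fun t => mkProd (fun N => pf N t)) ↔
        ∀ᶠ N in ((Filter.hyperfilter ℕ : Ultrafilter ℕ) : Filter ℕ), Real1 θ (xf N) (pf N) := by
    intro θ xf pf
    have h := Ultraproduct.realize_formula_cast (u := Filter.hyperfilter ℕ)
      (M := fun _ : ℕ => (M : Type w)) θ
      (Sum.elim (fun _ : Fin 1 => xf) (fun t N => pf N t))
    have e1 : (fun i => mkProd (Sum.elim (fun _ : Fin 1 => xf) (fun t N => pf N t) i)) =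
        Sum.elim (fun _ : Fin 1 => mkProd xf)
          (fun t => mkProd (fun N => pf N t)) :=
      funext fun i => by cases i <;> rfl
    have e2 : ∀ N : ℕ, (fun i => Sum.elim (fun _ : Fin 1 => xf) (fun t N => pf N t) i N) =
        Sum.elim (fun _ : Fin 1 => xf N) (pf N) :=
      fun N => funext fun i => by cases i <;> rfl
    exact Iff.trans (iff_of_eq (congrArg θ.Realize e1.symm))
      (h.trans (Filter.eventually_congr (Filter.Eventually.of_forall
        fun N => iff_of_eq (congrArg θ.Realize (e2 N)))))
  refine ⟨l, Theory.ModelType.of T (((Filter.hyperfilter ℕ : Ultrafilter ℕ) : Filter ℕ).Product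
      (fun _ : ℕ => (M : Type w))),
    fun k t => mkProd (fun N => A N k t),
    fun k t => mkProd (fun N => B N k t), ?_⟩
  intro i j s
  have hev : ∀ᶠ N in ((Filter.hyperfilter ℕ : Ultrafilter ℕ) : Filter ℕ),
      max (max i j) (s.sup id) < N := by
    have h1 : ∀ᶠ N in Filter.cofinite, max (max i j) (s.sup id) < N :=
      Nat.cofinite_eq_atTop ▸ Filter.eventually_gt_atTop _
    exact h1.filter_mono (Filter.hyperfilter_le_cofinite)
  refine ⟨mkProd (fun N => W N i j), ?_, ?_, ?_, ?_⟩
  · refine (transfer (φs l) (fun N => W N i j) (fun N => A N i)).2 (hev.mono fun N hN => ?_)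
    have hi : i < N := lt_of_le_of_lt ((le_max_left i j).trans (le_max_left _ _)) hN
    have hj : j < N := lt_of_le_of_lt ((le_max_right i j).trans (le_max_left _ _)) hN
    exact (hW N i j hi hj).1
  · refine (transfer ψ (fun N => W N i j) (fun N => B N j)).2 (hev.mono fun N hN => ?_)
    have hi : i < N := lt_of_le_of_lt ((le_max_left i j).trans (le_max_left _ _)) hN
    have hj : j < N := lt_of_le_of_lt ((le_max_right i j).trans (le_max_left _ _)) hN
    exact (hW N i j hi hj).2.1
  · intro k hk hki hreal
    have h' := (transfer (φs l) (fun N => W N i j) (fun N => A N k)).1 hreal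
    have hev' : ∀ᶠ N in ((Filter.hyperfilter ℕ : Ultrafilter ℕ) : Filter ℕ),
        ¬ Real1 (φs l) (W N i j) (A N k) := by
      refine hev.mono fun N hN => ?_
      have hi : i < N := lt_of_le_of_lt ((le_max_left i j).trans (le_max_left _ _)) hN
      have hj : j < N := lt_of_le_of_lt ((le_max_right i j).trans (le_max_left _ _)) hN
      have hkN : k < N := lt_of_le_of_lt ((Finset.le_sup (f := id) hk).trans (le_max_right _ _)) hN
      exact (hW N i j hi hj).2.2.1 k hkN hki
    obtain ⟨N, hN1, hN2⟩ := (h'.and hev').exists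
    exact hN2 hN1
  · intro k hk hkj hreal
    have h' := (transfer ψ (fun N => W N i j) (fun N => B N k)).1 hreal
    have hev' : ∀ᶠ N in ((Filter.hyperfilter ℕ : Ultrafilter ℕ) : Filter ℕ),
        ¬ Real1 ψ (W N i j) (B N k) := by
      refine hev.mono fun N hN => ?_
      have hi : i < N := lt_of_le_of_lt ((le_max_left i j).trans (le_max_left _ _)) hN
      have hj : j < N := lt_of_le_of_lt ((le_max_right i j).trans (le_max_left _ _)) hN
      have hkN : k < N := lt_of_le_of_lt ((Finset.le_sup (f := id) hk).trans (le_max_right _ _)) hN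
      exact (hW N i j hi hj).2.2.2 k hkN hkj
    obtain ⟨N, hN1, hN2⟩ := (h'.and hev').exists
    exact hN2 hN1


end DpMin
end

section
/- Suppose the complete L-theory T is not dp-minimal. Then there is a single L-formula θ(x,ȳ), a model M of T, and sequences (c̄ᵢ)_{i∈ℕ} and (d̄ⱼ)_{j∈ℕ} of ȳ-tuples from M such that for any i ≠ j the set of formulas {θ(x,c̄ᵢ), θ(x,d̄ⱼ)} ∪ {¬θ(x,c̄ₖ) : k ≠ i} ∪ {¬θ(x,d̄ₗ) : l ≠ j} is consistent, i.e. every finite subset of it is realized by some element of M. -/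
open FirstOrder Language Set

universe u v w

namespace DpMin

/-- If `T` is not dp-minimal, then a single formula `θ` witnesses this: there are sequences
`(c̄ᵢ)` and `(d̄ⱼ)` in some model such that for all `i ≠ j` the set
`{θ(x,c̄ᵢ), θ(x,d̄ⱼ)} ∪ {¬θ(x,c̄ₖ) : k ≠ i} ∪ {¬θ(x,d̄ₗ) : l ≠ j}` is consistent. -/
theorem single_formula_witness {L : FirstOrder.Language.{u, v}}
    (T : L.Theory) (hT : T.IsComplete) (h : ¬ IsDpMinimal.{u, v, w} T) :
    ∃ (m : ℕ) (θ : L.Formula (Fin 1 ⊕ Fin m))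
      (M : FirstOrder.Language.Theory.ModelType.{u, v, w} T)
      (c d : ℕ → Fin m → M),
      ∀ i j : ℕ, i ≠ j → ∀ s : Finset ℕ, ∃ x : M,
        Real1 θ x (c i) ∧ Real1 θ x (d j) ∧
        (∀ k ∈ s, k ≠ i → ¬ Real1 θ x (c k)) ∧
        (∀ l ∈ s, l ≠ j → ¬ Real1 θ x (d l)) := by
  classical
  rw [IsDpMinimal] at h
  push_neg at h
  obtain ⟨M, hstr, hne, hmod, m, φ, ψ, a, b, hict⟩ := h
  refine ⟨m + m,
    (φ.relabel (Sum.map id (Fin.castAdd m))) ⊔ (ψ.relabel (Sum.map id (Fin.natAdd m))),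
    @Theory.ModelType.mk L T M hstr hmod hne,
    (fun i => Fin.append (a (2 * i)) (b (2 * i))),
    (fun j => Fin.append (a (2 * j + 1)) (b (2 * j + 1))), ?_⟩
  have hreal : ∀ (x : M) (u v : Fin m → M),
      Real1 ((φ.relabel (Sum.map id (Fin.castAdd m))) ⊔ (ψ.relabel (Sum.map id (Fin.natAdd m))))
        x (Fin.append u v) ↔ Real1 φ x u ∨ Real1 ψ x v := by
    intro x u v
    have h1 : (Sum.elim (fun _ : Fin 1 => x) (Fin.append u v)) ∘ Sum.map id (Fin.castAdd m)
        = Sum.elim (fun _ : Fin 1 => x) u := by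
      funext p; rcases p with p | p
      · rfl
      · simp [Fin.append_left]
    have h2 : (Sum.elim (fun _ : Fin 1 => x) (Fin.append u v)) ∘ Sum.map id (Fin.natAdd m)
        = Sum.elim (fun _ : Fin 1 => x) v := by
      funext p; rcases p with p | p
      · rfl
      · exact Fin.append_right u v p
    simp only [Real1, Formula.realize_sup, Formula.realize_relabel, h1, h2]

  intro i j _ s
  obtain ⟨x, hφ, hψ, hnφ, hnψ⟩ := hict (2 * i) (2 * j + 1)
    ((s.image (fun k => 2 * k)) ∪ (s.image (fun k => 2 * k + 1)))
  refine ⟨x, ?_, ?_, ?_, ?_⟩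
  · exact (hreal x _ _).2 (Or.inl hφ)
  · exact (hreal x _ _).2 (Or.inr hψ)
  · intro k hk hki hθ
    rcases (hreal x _ _).1 hθ with h' | h'
    · exact hnφ (2 * k) (Finset.mem_union_left _ (Finset.mem_image_of_mem _ hk))
        (by omega) h'
    · exact hnψ (2 * k) (Finset.mem_union_left _ (Finset.mem_image_of_mem _ hk))
        (by omega) h'
  · intro l hl hlj hθ
    rcases (hreal x _ _).1 hθ with h' | h'
    · exact hnφ (2 * l + 1) (Finset.mem_union_right _ (Finset.mem_image_of_mem _ hl))
        (by omega) h'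
    · exact hnψ (2 * l + 1) (Finset.mem_union_right _ (Finset.mem_image_of_mem _ hl))
        (by omega) h'


end DpMin
end

section
/- Let L be the language with unary predicate symbols Pᵢ for each i ∈ ω₁, and let T be the L-theory consisting of all sentences σ_{I,J,n} for finite disjoint I,J ⊆ ω₁ and n ∈ ℕ, where σ_{I,J,n} asserts that there exist at least n elements x with ⋀_{i∈I} Pᵢ(x) ∧ ⋀_{j∈J} ¬Pⱼ(x). Then T is not VC-minimal: for every model M of T there is no family Φ of L-formulas φ(x,ȳ) such that (i) for all φ(x,ȳ), ψ(x,ȳ) ∈ Φ and all tuples ā, b̄ from M, one of the four containments φ(M,ā) ⊆ ψ(M,b̄), ψ(M,b̄) ⊆ φ(M,ā), M∖φ(M,ā) ⊆ ψ(M,b̄), ψ(M,b̄) ⊆ M∖φ(M,ā) holds, and (ii) every set Pᵢ(M) = {x ∈ M : M ⊨ Pᵢ(x)}, i ∈ ω₁, is a finite Boolean combination (using finite unions, finite intersections, and complements) of instances φ(M,ā) with φ ∈ Φ and ā a tuple from M. -/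
open FirstOrder Language Set

universe u v w

namespace DpMin

open Ordinal in
/-- The index set of the predicates: the first uncountable ordinal `ω₁`. -/
abbrev Omega1 : Type := (ω_ 1).ToType

/-- The language with unary predicate symbols `Pᵢ` for `i ∈ ω₁` and no function symbols. -/
def LOmega : FirstOrder.Language where
  Functions := fun _ => Empty
  Relations := fun n =>
    match n with
    | 1 => Omega1
    | _ => Empty

/-- The sentence `σ_{I,J,n}`: there exist at least `n` (pairwise distinct) elements `x` with
`⋀_{i∈I} Pᵢ(x) ∧ ⋀_{j∈J} ¬Pⱼ(x)`. -/
noncomputable def sigmaSentence (I J : Finset Omega1) (n : ℕ) : LOmega.Sentence :=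
  (((((List.finRange n ×ˢ List.finRange n).filter fun ij : _ × _ => ij.1 ≠ ij.2).map
        fun ij : _ × _ => ∼((&ij.1).bdEqual &ij.2)) ++
      ((I.toList ×ˢ List.finRange n).map fun p : Omega1 × Fin n =>
        Relations.boundedFormula₁ (show LOmega.Relations 1 from p.1) (&p.2)) ++
      ((J.toList ×ˢ List.finRange n).map fun p : Omega1 × Fin n =>
        ∼(Relations.boundedFormula₁ (show LOmega.Relations 1 from p.1) (&p.2)))).foldr
    (· ⊓ ·) ⊤).exs

/-- The theory of the `σ_{I,J,n}` for disjoint finite `I, J ⊆ ω₁` and `n ∈ ℕ`. -/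
def TOmega : LOmega.Theory :=
  {σ | ∃ (I J : Finset Omega1) (n : ℕ), Disjoint I J ∧ σ = sigmaSentence I J n}

end DpMin

namespace DpMin

/-- Finite Boolean combinations of sets from a collection `S`. -/
inductive BoolComb {α : Type*} (S : Set (Set α)) : Set α → Prop
  | base {s : Set α} : s ∈ S → BoolComb S s
  | compl {s : Set α} : BoolComb S s → BoolComb S sᶜ
  | union {s t : Set α} : BoolComb S s → BoolComb S t → BoolComb S (s ∪ t)
  | inter {s t : Set α} : BoolComb S s → BoolComb S t → BoolComb S (s ∩ t)

/-- The instance `φ(M, ā)` of a formula `φ(x, ȳ)` at a parameter tuple `ā`. -/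
def instSet {L : FirstOrder.Language.{u, v}} {M : Type w} [L.Structure M]
    (φ : (m : ℕ) × L.Formula (Fin 1 ⊕ Fin m)) (a : Fin φ.1 → M) : Set M :=
  {x : M | φ.2.Realize (Sum.elim (fun _ => x) a)}

attribute [local instance] Classical.propDecidable

def DependsOn (t : Set α) (F : Finset (Set α)) : Prop :=
  ∀ x y : α, (∀ s ∈ F, (x ∈ s ↔ y ∈ s)) → (x ∈ t ↔ y ∈ t)

lemma boolComb_dependsOn {S : Set (Set α)} {t : Set α} (h : BoolComb S t) :
    ∃ F : Finset (Set α), ↑F ⊆ S ∧ DependsOn t F := by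
  induction h with
  | @base s hs =>
      exact ⟨{s}, by simpa using hs, fun x y hxy => hxy s (Finset.mem_singleton_self s)⟩
  | @compl s _ ih =>
      obtain ⟨F, hF, hd⟩ := ih
      exact ⟨F, hF, fun x y hxy => by
        simp only [Set.mem_compl_iff]
        exact not_congr (hd x y hxy)⟩
  | @union s t _ _ ih1 ih2 =>
      obtain ⟨F1, hF1, hd1⟩ := ih1
      obtain ⟨F2, hF2, hd2⟩ := ih2
      refine ⟨F1 ∪ F2, fun u hu => ?_, fun x y hxy => ?_⟩
      · rcases Finset.mem_union.mp hu with h | h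
        exacts [hF1 h, hF2 h]
      · simp only [Set.mem_union]
        exact or_congr (hd1 x y fun s hs => hxy s (Finset.mem_union_left _ hs))
          (hd2 x y fun s hs => hxy s (Finset.mem_union_right _ hs))
  | @inter s t _ _ ih1 ih2 =>
      obtain ⟨F1, hF1, hd1⟩ := ih1
      obtain ⟨F2, hF2, hd2⟩ := ih2
      refine ⟨F1 ∪ F2, fun u hu => ?_, fun x y hxy => ?_⟩
      · rcases Finset.mem_union.mp hu with h | h
        exacts [hF1 h, hF2 h]
      · simp only [Set.mem_inter_iff]
        exact and_congr (hd1 x y fun s hs => hxy s (Finset.mem_union_left _ hs))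
          (hd2 x y fun s hs => hxy s (Finset.mem_union_right _ hs))

noncomputable def star (p : α) (s : Set α) : Set α := if p ∈ s then sᶜ else s

lemma mem_iff_of_star {p x y : α} {s : Set α}
    (h : x ∈ star p s ↔ y ∈ star p s) : (x ∈ s ↔ y ∈ s) := by
  unfold star at h
  split at h
  · simpa using not_congr h
  · exact h

lemma star_laminar {p : α} {s t : Set α}
    (h : s ⊆ t ∨ t ⊆ s ∨ sᶜ ⊆ t ∨ t ⊆ sᶜ) :
    star p s ⊆ star p t ∨ star p t ⊆ star p s ∨ Disjoint (star p s) (star p t) := by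
  unfold star
  split_ifs with hs ht ht
  · rcases h with h | h | h | h
    · exact Or.inr (Or.inl (Set.compl_subset_compl.mpr h))
    · exact Or.inl (Set.compl_subset_compl.mpr h)
    · exact Or.inr (Or.inr (Set.disjoint_left.mpr fun x hx hx' => hx' (h hx)))
    · exact absurd (h ht) (not_not_intro hs)
  · rcases h with h | h | h | h
    · exact absurd (h hs) ht
    · exact Or.inr (Or.inr (Set.disjoint_left.mpr fun x hx hx' => hx (h hx')))
    · exact Or.inl h
    · exact Or.inr (Or.inl h)
  · rcases h with h | h | h | h
    · exact Or.inr (Or.inr (Set.disjoint_left.mpr fun x hx hx' => hx' (h hx)))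
    · exact absurd (h ht) hs
    · exact Or.inr (Or.inl (Set.compl_subset_comm.mp h))
    · exact Or.inl (Set.subset_compl_comm.mp h)
  · rcases h with h | h | h | h
    · exact Or.inl h
    · exact Or.inr (Or.inl h)
    · exact absurd (h hs) ht
    · exact Or.inr (Or.inr (Set.disjoint_left.mpr fun x hx hx' => h hx' hx))

lemma exists_least_mem {F : Finset (Set α)}
    (hl : ∀ s ∈ F, ∀ t ∈ F, s ⊆ t ∨ t ⊆ s ∨ Disjoint s t) {x : α}
    (hx : ∃ s, s ∈ F ∧ x ∈ s) :
    ∃ s, s ∈ F ∧ x ∈ s ∧ ∀ t ∈ F, x ∈ t → s ⊆ t := by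
  classical
  obtain ⟨s₀, hs₀F, hs₀x⟩ := hx
  obtain ⟨s, hsFx, hmin⟩ := Finset.exists_minimal (s := F.filter fun s => x ∈ s)
    ⟨s₀, Finset.mem_filter.mpr ⟨hs₀F, hs₀x⟩⟩
  rw [Finset.mem_filter] at hsFx
  refine ⟨s, hsFx.1, hsFx.2, fun t htF hxt => ?_⟩
  rcases hl s hsFx.1 t htF with h | h | h
  · exact h
  · rcases eq_or_ne t s with rfl | hne
    · exact subset_rfl
    · exact hmin (Finset.mem_filter.mpr ⟨htF, hxt⟩) h
  · exact absurd hsFx.2 (Set.disjoint_left.mp h.symm hxt)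

lemma pattern_count {F : Finset (Set α)}
    (hl : ∀ s ∈ F, ∀ t ∈ F, s ⊆ t ∨ t ⊆ s ∨ Disjoint s t) :
    ∃ μ : α → Option (Set α),
      (∀ x, μ x ∈ insert none (F.image some)) ∧
      (∀ x y, μ x = μ y → ∀ s ∈ F, (x ∈ s ↔ y ∈ s)) := by
  classical
  refine ⟨fun x => if h : ∃ s, s ∈ F ∧ x ∈ s ∧ ∀ t ∈ F, x ∈ t → s ⊆ t then some h.choose
    else none, fun x => ?_, fun x y hxy s hs => ?_⟩
  · dsimp only
    split
    · next h =>
        exact Finset.mem_insert.mpr (Or.inr (Finset.mem_image_of_mem some h.choose_spec.1))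
    · exact Finset.mem_insert_self _ _
  · dsimp only at hxy
    split at hxy <;> split at hxy
    · next hx hy =>
        obtain ⟨hFx, hxm, hxleast⟩ := hx.choose_spec
        obtain ⟨hFy, hym, hyleast⟩ := hy.choose_spec
        have e : hx.choose = hy.choose := Option.some.inj hxy
        constructor
        · intro hxs
          exact (e ▸ hxleast s hs hxs) hym
        · intro hys
          exact (e ▸ hyleast s hs hys : hx.choose ⊆ s) hxm
    · exact absurd hxy (by simp)
    · exact absurd hxy (by simp)
    · next hx hy =>
        constructor
        · intro hxs
          exact absurd (exists_least_mem hl ⟨s, hs, hxs⟩) hx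
        · intro hys
          exact absurd (exists_least_mem hl ⟨s, hs, hys⟩) hy

lemma arith (n : ℕ) : (4 * n + 2) * n + 1 < 2 ^ (4 * n + 2) := by
  have h : 2 * n + 1 < 2 ^ (2 * n + 1) := Nat.lt_two_pow_self
  have h2 : 2 ^ (4 * n + 2) = 2 ^ (2 * n + 1) * 2 ^ (2 * n + 1) := by
    rw [← pow_add]; congr 1; ring
  nlinarith [h, h2]


lemma exists_pattern {M : Type w} [LOmega.Structure M] (hM : M ⊨ TOmega)
    (I J : Finset Omega1) (hIJ : Disjoint I J) :
    ∃ x : M, (∀ i ∈ I, Structure.RelMap (show LOmega.Relations 1 from i) ![x]) ∧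
      (∀ j ∈ J, ¬ Structure.RelMap (show LOmega.Relations 1 from j) ![x]) := by
  have hσ : M ⊨ sigmaSentence I J 1 := hM.realize_of_mem _ ⟨I, J, 1, hIJ, rfl⟩
  unfold sigmaSentence at hσ
  rw [Sentence.Realize, BoundedFormula.realize_exs] at hσ
  obtain ⟨xs, hxs⟩ := hσ
  rw [BoundedFormula.realize_foldr_inf] at hxs
  refine ⟨xs 0, fun i hi => ?_, fun j hj => ?_⟩
  · have := hxs _ (List.mem_append.mpr (Or.inl (List.mem_append.mpr (Or.inr
      (List.mem_map_of_mem (List.pair_mem_product.mpr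
        ⟨Finset.mem_toList.mpr hi, List.mem_finRange (0 : Fin 1)⟩))))))
    rw [BoundedFormula.realize_rel₁] at this
    simpa using this
  · have := hxs _ (List.mem_append.mpr (Or.inr
      (List.mem_map_of_mem (List.pair_mem_product.mpr
        ⟨Finset.mem_toList.mpr hj, List.mem_finRange (0 : Fin 1)⟩))))
    rw [BoundedFormula.realize_not, BoundedFormula.realize_rel₁] at this
    simpa using this

/-- The theory `TOmega` is not VC-minimal: in no model is there a family `Φ` of formulas whose
instances are pairwise compatible (one of the four containments always holds) and generate every
predicate `Pᵢ` by finite Boolean combinations. -/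
theorem TOmega_not_vcMinimal :
    ∀ (M : Type w) [LOmega.Structure M] [Nonempty M], M ⊨ TOmega →
      ¬ ∃ Φ : Set ((m : ℕ) × LOmega.Formula (Fin 1 ⊕ Fin m)),
        (∀ φ ∈ Φ, ∀ ψ ∈ Φ, ∀ (a : Fin φ.1 → M) (b : Fin ψ.1 → M),
          instSet φ a ⊆ instSet ψ b ∨ instSet ψ b ⊆ instSet φ a ∨
          (instSet φ a)ᶜ ⊆ instSet ψ b ∨ instSet ψ b ⊆ (instSet φ a)ᶜ) ∧
        (∀ i : Omega1,
          BoolComb {s : Set M | ∃ φ ∈ Φ, ∃ a : Fin φ.1 → M, s = instSet φ a}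
            {x : M | Structure.RelMap (show LOmega.Relations 1 from i) ![x]}) := by
  intro M _ _ hM h
  obtain ⟨Φ, hdir, hgen⟩ := h
  classical
  obtain ⟨p⟩ := (inferInstance : Nonempty M)
  have h1 : ∀ i : Omega1, ∃ F : Finset (Set M),
      (↑F ⊆ {s : Set M | ∃ φ ∈ Φ, ∃ a : Fin φ.1 → M, s = instSet φ a}) ∧
      DependsOn {x : M | Structure.RelMap (show LOmega.Relations 1 from i) ![x]} F :=
    fun i => boolComb_dependsOn (hgen i)
  choose F hFS hdep using h1
  have hcard : (Cardinal.mk ℕ) < Cardinal.mk Omega1 := by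
    rw [Cardinal.mk_nat, Cardinal.mk_toType, Ordinal.card_omega]
    exact Cardinal.aleph0_lt_aleph_one
  obtain ⟨n, hn⟩ := Cardinal.exists_infinite_fiber' (fun i => (F i).card) hcard
  obtain ⟨t, hts, htc⟩ := (Set.infinite_coe_iff.mp hn).exists_subset_card_eq (4 * n + 2)
  set m := 4 * n + 2 with hm
  set e : Fin m → Omega1 := fun k => ((t.orderIsoOfFin htc) k : Omega1) with he
  have he_inj : Function.Injective e :=
    fun a b hab => (t.orderIsoOfFin htc).injective (Subtype.ext hab)
  have he_card : ∀ k, (F (e k)).card = n := by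
    intro k
    have h := hts (Finset.mem_coe.mpr ((t.orderIsoOfFin htc) k).2)
    simpa [he] using h
  set G : Fin m → Finset (Set M) := fun k => (F (e k)).image (star p) with hG
  set Fbig : Finset (Set M) := Finset.univ.biUnion G with hFbig
  have hFbig_card : Fbig.card ≤ m * n := by
    refine le_trans Finset.card_biUnion_le ?_
    calc ∑ k, (G k).card ≤ ∑ _k : Fin m, n :=
          Finset.sum_le_sum fun k _ =>
            le_trans Finset.card_image_le (le_of_eq (he_card k))
      _ = m * n := by simp [mul_comm]
  have hl : ∀ s ∈ Fbig, ∀ u ∈ Fbig, s ⊆ u ∨ u ⊆ s ∨ Disjoint s u := by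
    intro s hs u hu
    obtain ⟨k, -, hs⟩ := Finset.mem_biUnion.mp hs
    obtain ⟨k', -, hu⟩ := Finset.mem_biUnion.mp hu
    obtain ⟨s0, hs0, rfl⟩ := Finset.mem_image.mp hs
    obtain ⟨u0, hu0, rfl⟩ := Finset.mem_image.mp hu
    obtain ⟨φ, hφ, a, rfl⟩ := hFS _ hs0
    obtain ⟨ψ, hψ, b, rfl⟩ := hFS _ hu0
    exact star_laminar (hdir φ hφ ψ hψ a b)
  obtain ⟨μ, hμmem, hμ⟩ := pattern_count hl
  have hreal : ∀ ε : Fin m → Bool, ∃ x : M,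
      (∀ k, ε k = true → Structure.RelMap (show LOmega.Relations 1 from e k) ![x]) ∧
      (∀ k, ε k = false → ¬ Structure.RelMap (show LOmega.Relations 1 from e k) ![x]) := by
    intro ε
    have hdisj : Disjoint ((Finset.univ.filter fun k => ε k = true).image e)
        ((Finset.univ.filter fun k => ε k = false).image e) := by
      rw [Finset.disjoint_left]
      rintro i hi hi'
      obtain ⟨k, hk, rfl⟩ := Finset.mem_image.mp hi
      obtain ⟨k', hk', hekk⟩ := Finset.mem_image.mp hi'
      cases he_inj hekk
      simp only [Finset.mem_filter] at hk hk'
      rw [hk.2] at hk'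
      exact Bool.noConfusion hk'.2
    obtain ⟨x, hx1, hx2⟩ := exists_pattern hM _ _ hdisj
    exact ⟨x, fun k hk => hx1 _ (Finset.mem_image_of_mem e (by simp [hk])),
      fun k hk => hx2 _ (Finset.mem_image_of_mem e (by simp [hk]))⟩
  choose xr hxr1 hxr2 using hreal
  have hinj : Function.Injective (fun ε => μ (xr ε)) := by
    intro ε ε' hee
    simp only at hee
    funext k
    have hpt : ∀ s ∈ F (e k), (xr ε ∈ s ↔ xr ε' ∈ s) := by
      intro s hs
      exact mem_iff_of_star (hμ _ _ hee (star p s)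
        (Finset.mem_biUnion.mpr ⟨k, Finset.mem_univ k, Finset.mem_image_of_mem _ hs⟩))
    have hmem := hdep (e k) (xr ε) (xr ε') hpt
    cases hek : ε k <;> cases hek' : ε' k
    · rfl
    · exact absurd (hmem.mpr (hxr1 ε' k hek')) (hxr2 ε k hek)
    · exact absurd (hmem.mp (hxr1 ε k hek)) (hxr2 ε' k hek')
    · rfl
  have hcount : (2 : ℕ) ^ m ≤ m * n + 1 := by
    have h1 : (Finset.univ : Finset (Fin m → Bool)).card ≤
        (insert none (Fbig.image some)).card :=
      Finset.card_le_card_of_injOn (fun ε => μ (xr ε)) (fun ε _ => hμmem (xr ε))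
        hinj.injOn
    have h2 : (insert none (Fbig.image some)).card ≤ Fbig.card + 1 :=
      le_trans (Finset.card_insert_le _ _)
        (Nat.add_le_add_right Finset.card_image_le 1)
    simp only [Finset.card_univ, Fintype.card_fun, Fintype.card_bool,
      Fintype.card_fin] at h1
    omega
  exact absurd hcount (not_le.mpr (hm ▸ arith n))

end DpMin
end

section
/- Every weakly o-minimal complete theory is dp-minimal: if L is a language containing a binary relation symbol <, and T is a complete L-theory such that in every model of T the symbol < is interpreted as a linear order and every subset of the model definable with parameters by an L-formula in one free variable is a finite union of <-convex sets, then no model of T admits an ICT pattern. -/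
open FirstOrder Language Set

universe u v w

namespace DpMin

/-- A subset of a structure is convex with respect to a binary relation `r` (thought of as `<`):
it contains any point lying between two of its points. -/
def ConvexRel {M : Type w} (r : M → M → Prop) (X : Set M) : Prop :=
  ∀ a ∈ X, ∀ c ∈ X, ∀ b : M, (r a b ∨ a = b) → (r b c ∨ b = c) → b ∈ X

/-- An alternating chain of length `n` for `S`: adjacent points are `r`-increasing, and
membership in `S` alternates, starting with a point of `S`. -/
def AltOn {M : Type w} (r : M → M → Prop) (S : Set M) (n : ℕ) : Prop :=
  ∃ y : ℕ → M, (∀ t, t + 1 < n → r (y t) (y (t + 1))) ∧ (∀ t < n, (y t ∈ S ↔ Even t))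

lemma AltOn.mono {M : Type w} {r : M → M → Prop} {S : Set M} {n n' : ℕ}
    (h : AltOn r S n) (hle : n' ≤ n) : AltOn r S n' := by
  obtain ⟨y, h1, h2⟩ := h
  exact ⟨y, fun t ht => h1 t (lt_of_lt_of_le ht hle), fun t ht => h2 t (lt_of_lt_of_le ht hle)⟩

lemma chain_trans {M : Type w} {r : M → M → Prop} (htr : Transitive r)
    {y : ℕ → M} {n : ℕ} (h : ∀ t, t + 1 < n → r (y t) (y (t + 1))) :
    ∀ s t, s < t → t < n → r (y s) (y t) := by
  intro s t
  induction t with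
  | zero => omega
  | succ t ih =>
    intro hst htn
    rcases Nat.lt_or_ge s t with h' | h'
    · exact htr (ih h' (by omega)) (h t htn)
    · have hst' : s = t := by omega
      subst hst'; exact h s htn

/-- A finite union of `r`-convex sets admits no alternating chain with `N + 1` "in" points. -/
lemma not_altOn {M : Type w} {r : M → M → Prop} (htr : Transitive r)
    {S : Set M} {N : ℕ} {C : Fin N → Set M}
    (hC : ∀ v, ConvexRel r (C v)) (hS : S = ⋃ v, C v) :
    ¬ AltOn r S (2 * N + 1) := by
  rintro ⟨y, hadj, hmem⟩
  have hin : ∀ s : Fin (N + 1), ∃ v : Fin N, y (2 * (s : ℕ)) ∈ C v := by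
    intro s
    have hlt : 2 * (s : ℕ) < 2 * N + 1 := by have := s.isLt; omega
    have h1 : y (2 * (s : ℕ)) ∈ S := (hmem _ hlt).2 (even_two_mul _)
    rw [hS] at h1
    exact Set.mem_iUnion.1 h1
  choose g hg using hin
  have key : ∀ s s' : Fin (N + 1), s < s' → g s = g s' → False := by
    intro s s' hlt heq
    have hs' : (s' : ℕ) ≤ N := by have := s'.isLt; omega
    have hss : (s : ℕ) < (s' : ℕ) := hlt
    have hb1 : r (y (2 * (s : ℕ))) (y (2 * (s : ℕ) + 1)) := hadj _ (by omega)
    have hb2 : r (y (2 * (s : ℕ) + 1)) (y (2 * (s' : ℕ))) :=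
      chain_trans htr hadj _ _ (by omega) (by omega)
    have hbC : y (2 * (s : ℕ) + 1) ∈ C (g s) :=
      hC (g s) _ (hg s) _ (heq ▸ hg s') _ (Or.inl hb1) (Or.inl hb2)
    have hbS : y (2 * (s : ℕ) + 1) ∈ S := hS ▸ Set.mem_iUnion.2 ⟨g s, hbC⟩
    have hev : Even (2 * (s : ℕ) + 1) := (hmem _ (by omega)).1 hbS
    exact (Nat.even_add_one.1 hev) (even_two_mul _)
  obtain ⟨s, s', hne, heq⟩ := Fintype.exists_ne_map_eq_of_card_lt g (by simp)
  rcases lt_or_gt_of_ne hne with h | h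
  · exact key s s' h heq
  · exact key s' s h heq.symm

/-- The predecessor map on `Fin D` (sending `0` to `0`). -/
def predF {D : ℕ} (t : Fin D) : Fin D :=
  ⟨(t : ℕ) - 1, lt_of_le_of_lt (Nat.sub_le _ _) t.isLt⟩

/-- Along an `r`-increasing enumeration whose labels determine membership in the sets `S i`,
there are at most `K` "run starts" with label `i`, provided `S i` has no long alternating
chain. -/
lemma card_start_le {M : Type w} {r : M → M → Prop}
    {D n K : ℕ} {S : Fin n → Set M}
    (hS : ∀ i, ¬ AltOn r (S i) (2 * K + 1))
    (q : Fin D → M) (hq : ∀ s t : Fin D, s < t → r (q s) (q t))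
    (lbl : Fin D → Fin n)
    (hmem : ∀ t i, q t ∈ S i ↔ lbl t = i)
    (i : Fin n) :
    (Finset.univ.filter fun t : Fin D =>
        ((t : ℕ) = 0 ∨ lbl (predF t) ≠ lbl t) ∧ lbl t = i).card ≤ K := by
  classical
  by_contra hcon
  push_neg at hcon
  obtain ⟨F, hFsub, hFcard⟩ := Finset.exists_subset_card_eq
    (s := Finset.univ.filter fun t : Fin D =>
      ((t : ℕ) = 0 ∨ lbl (predF t) ≠ lbl t) ∧ lbl t = i) (n := K + 1) (by omega)
  have hstart : ∀ t ∈ F, ((t : ℕ) = 0 ∨ lbl (predF t) ≠ lbl t) ∧ lbl t = i :=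
    fun t ht => (Finset.mem_filter.1 (hFsub ht)).2
  let u := F.orderIsoOfFin hFcard
  let w : ℕ → Fin D := fun s => (u ⟨min s K, by omega⟩ : Fin D)
  have hwF : ∀ s, w s ∈ F := fun s => (u _).2
  have hw_mono : ∀ s s' : ℕ, s < s' → s' ≤ K → w s < w s' := by
    intro s s' h1 h2
    have : (⟨min s K, by omega⟩ : Fin (K + 1)) < ⟨min s' K, by omega⟩ := by
      simp only [Fin.mk_lt_mk]; omega
    exact Subtype.coe_lt_coe.2 (u.strictMono this)
  have h1 : ∀ s : ℕ, s + 1 ≤ K → (w (s + 1) : ℕ) ≠ 0 := by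
    intro s hs
    have := hw_mono 0 (s + 1) (by omega) hs
    have h0 : (w 0 : ℕ) < (w (s + 1) : ℕ) := this
    omega
  have h2 : ∀ s : ℕ, s + 1 ≤ K → lbl (predF (w (s + 1))) ≠ i := by
    intro s hs
    obtain ⟨hst, hlb⟩ := hstart _ (hwF (s + 1))
    rcases hst with h0 | hne
    · exact absurd h0 (h1 s hs)
    · rw [hlb] at hne; exact hne
  have h3 : ∀ s : ℕ, s + 1 ≤ K → w s < predF (w (s + 1)) := by
    intro s hs
    have hlt : w s < w (s + 1) := hw_mono s (s + 1) (by omega) hs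
    have hlt' : (w s : ℕ) < (w (s + 1) : ℕ) := hlt
    have hle : (w s : ℕ) ≤ (w (s + 1) : ℕ) - 1 := by omega
    rcases Nat.lt_or_ge (w s : ℕ) ((w (s + 1) : ℕ) - 1) with h | h
    · exact h
    · exfalso
      have heq : predF (w (s + 1)) = w s := by
        apply Fin.ext; simp only [predF]; omega
      have := h2 s hs
      rw [heq, (hstart _ (hwF s)).2] at this
      exact this rfl
  have h4 : ∀ s : ℕ, s + 1 ≤ K → predF (w (s + 1)) < w (s + 1) := by
    intro s hs
    have := h1 s hs
    show ((w (s + 1) : ℕ) - 1) < (w (s + 1) : ℕ)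
    omega
  apply hS i
  refine ⟨fun t => if Even t then q (w (t / 2)) else q (predF (w (t / 2 + 1))), ?_, ?_⟩
  · intro t ht
    dsimp only
    rcases Nat.even_or_odd t with he | ho
    · have hodd : ¬ Even (t + 1) := by simp [Nat.even_add_one, he]
      rw [if_pos he, if_neg hodd]
      obtain ⟨c, hc⟩ := he
      have : (t + 1) / 2 + 1 = t / 2 + 1 := by omega
      rw [this]
      exact hq _ _ (h3 (t / 2) (by omega))
    · have he1 : Even (t + 1) := Nat.even_add_one.2 (by simpa using ho)
      have hne : ¬ Even t := by simpa using ho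
      rw [if_neg hne, if_pos he1]
      obtain ⟨c, hc⟩ := ho
      have : (t + 1) / 2 = t / 2 + 1 := by omega
      rw [this]
      exact hq _ _ (h4 (t / 2) (by omega))
  · intro t ht
    dsimp only
    rcases Nat.even_or_odd t with he | ho
    · rw [if_pos he]
      exact iff_of_true ((hmem _ i).2 (hstart _ (hwF (t / 2))).2) he
    · have hne : ¬ Even t := by simpa using ho
      rw [if_neg hne]
      obtain ⟨c, hc⟩ := ho
      refine iff_of_false ?_ hne
      rw [hmem]
      exact h2 (t / 2) (by omega)

lemma realize_ltF {L : FirstOrder.Language.{u, v}} {X : Type*} [L.Structure X]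
    (lt : L.Relations 2) (vv : Fin 2 → X) :
    ((lt.formula₂ (Term.var 0) (Term.var 1) : L.Formula (Fin 2)).Realize vv) ↔
      Structure.RelMap lt ![vv 0, vv 1] := by
  rw [Formula.realize_rel₂]
  exact Iff.rfl

open Filter in
/-- Uniform bound on alternation along the parameter sequence, via an ultrapower. -/
lemma exists_bound {L : FirstOrder.Language.{u, v}} (lt : L.Relations 2) {T : L.Theory}
    (hlin : ∀ (M : Type w) [L.Structure M] [Nonempty M], M ⊨ T →
      IsStrictTotalOrder M (fun x y : M => Structure.RelMap lt ![x, y]))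
    (hwom : ∀ (M : Type w) [L.Structure M] [Nonempty M], M ⊨ T →
      ∀ (m : ℕ) (φ : L.Formula (Fin 1 ⊕ Fin m)) (a : Fin m → M),
        ∃ (N : ℕ) (C : Fin N → Set M),
          (∀ i, ConvexRel (fun x y : M => Structure.RelMap lt ![x, y]) (C i)) ∧
          {x : M | Real1 φ x a} = ⋃ i, C i)
    {M : Type w} [L.Structure M] [Nonempty M] (hM : M ⊨ T)
    {m : ℕ} (φ : L.Formula (Fin 1 ⊕ Fin m)) (a : ℕ → Fin m → M) :
    ∃ K : ℕ, ∀ i : ℕ,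
      ¬ AltOn (fun x y : M => Structure.RelMap lt ![x, y]) {x | Real1 φ x (a i)}
        (2 * K + 1) := by
  classical
  by_contra hcon
  push_neg at hcon
  choose idx hidx using hcon
  choose y hadj hmem using hidx
  haveI := hM
  let U : Ultrafilter ℕ := hyperfilter ℕ
  let NN := (U : Filter ℕ).Product (fun _ : ℕ => M)
  have hNT : NN ⊨ T := by
    rw [Theory.model_iff]
    intro σ hσ
    exact (Ultraproduct.sentence_realize (u := U) (M := fun _ : ℕ => M) σ).2
      (Filter.Eventually.of_forall fun _ => T.realize_sentence_of_mem hσ)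
  haveI hsto := hlin NN hNT
  have htr : Transitive (fun x y : NN => Structure.RelMap lt ![x, y]) :=
    fun x1 x2 x3 hab hbc =>
      IsTrans.trans (r := fun x y : NN => Structure.RelMap lt ![x, y]) x1 x2 x3 hab hbc
  let abar : Fin m → NN := fun v => (↑(fun k => a (idx k) v) : NN)
  let Y : ℕ → NN := fun t => (↑(fun k => y k t) : NN)
  have hYmem : ∀ t : ℕ, (Real1 φ (Y t) abar ↔ Even t) := by
    intro t
    have key : Real1 φ (Y t) abar ↔
        ∀ᶠ k in (U : Filter ℕ), Real1 φ (y k t) (a (idx k)) := by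
      have hval : (Sum.elim (fun _ => Y t) abar : Fin 1 ⊕ Fin m → NN)
          = fun i => (↑((fun i k => Sum.elim (fun _ => y k t) (a (idx k)) i) i) : NN) := by
        funext i; cases i <;> rfl
      unfold Real1
      rw [hval]
      exact Ultraproduct.realize_formula_cast φ _
    rcases Nat.even_or_odd t with he | ho
    · refine iff_of_true (key.2 ?_) he
      refine Filter.Eventually.filter_mono Nat.hyperfilter_le_atTop ?_
      rw [Filter.eventually_atTop]
      exact ⟨t, fun k hk => (hmem k t (by omega)).2 he⟩
    · have hne : ¬ Even t := by simpa using ho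
      refine iff_of_false ?_ hne
      intro hreal
      have h1 := key.1 hreal
      have h2 : ∀ᶠ k in (U : Filter ℕ), ¬ Real1 φ (y k t) (a (idx k)) := by
        refine Filter.Eventually.filter_mono Nat.hyperfilter_le_atTop ?_
        rw [Filter.eventually_atTop]
        exact ⟨t, fun k hk hr => hne ((hmem k t (by omega)).1 hr)⟩
      obtain ⟨k, hk1, hk2⟩ := (h1.and h2).exists
      exact hk2 hk1
  have hYadj : ∀ t : ℕ, Structure.RelMap (M := NN) lt ![Y t, Y (t + 1)] := by
    intro t
    let xx : Fin 2 → (ℕ → M) := fun i k => ![y k t, y k (t + 1)] i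
    have hcast := Ultraproduct.realize_formula_cast (u := U)
      (lt.formula₂ (Term.var 0) (Term.var 1) : L.Formula (Fin 2)) xx
    rw [realize_ltF] at hcast
    have hvec : (![Y t, Y (t + 1)] : Fin 2 → NN)
        = ![(↑(xx 0) : NN), (↑(xx 1) : NN)] := by
      funext i; fin_cases i <;> rfl
    rw [hvec]
    refine hcast.2 ?_
    refine Filter.Eventually.filter_mono Nat.hyperfilter_le_atTop ?_
    rw [Filter.eventually_atTop]
    refine ⟨t + 1, fun k hk => ?_⟩
    rw [realize_ltF]
    exact hadj k t (by omega)
  obtain ⟨N0, C, hC, hSeq⟩ := hwom NN hNT m φ abar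
  exact not_altOn htr hC hSeq ⟨Y, fun t _ => hYadj t, fun t _ => hYmem t⟩

/-- Every weakly o-minimal complete theory is dp-minimal: if `<` is a (strict) linear order in
every model and every set definable with parameters in one free variable is a finite union of
convex sets, then no model admits an ICT pattern. -/
theorem dpMinimal_of_weaklyOMinimal {L : FirstOrder.Language.{u, v}}
    (lt : L.Relations 2) (T : L.Theory) (hT : T.IsComplete)
    (hlin : ∀ (M : Type w) [L.Structure M] [Nonempty M], M ⊨ T →
      IsStrictTotalOrder M (fun x y : M => Structure.RelMap lt ![x, y]))
    (hwom : ∀ (M : Type w) [L.Structure M] [Nonempty M], M ⊨ T →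
      ∀ (m : ℕ) (φ : L.Formula (Fin 1 ⊕ Fin m)) (a : Fin m → M),
        ∃ (N : ℕ) (C : Fin N → Set M),
          (∀ i, ConvexRel (fun x y : M => Structure.RelMap lt ![x, y]) (C i)) ∧
          {x : M | Real1 φ x a} = ⋃ i, C i) :
    IsDpMinimal.{u, v, w} T := by
  classical
  intro M iM iN hM h
  obtain ⟨m, φ, ψ, a, b, hICT⟩ := h
  haveI hsto := hlin M hM
  set r : M → M → Prop := (fun x y : M => Structure.RelMap lt ![x, y]) with hr
  obtain ⟨Kφ, hKφ⟩ := exists_bound lt hlin hwom hM φ a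
  obtain ⟨Kψ, hKψ⟩ := exists_bound lt hlin hwom hM ψ b
  set K := max Kφ Kψ with hK
  set n := 2 * K + 1 with hn
  have hKa : ∀ i : ℕ, ¬ AltOn r {x | Real1 φ x (a i)} (2 * K + 1) := by
    intro i hA
    exact hKφ i (hA.mono (by omega))
  have hKb : ∀ i : ℕ, ¬ AltOn r {x | Real1 ψ x (b i)} (2 * K + 1) := by
    intro i hA
    exact hKψ i (hA.mono (by omega))
  -- the grid of ICT witnesses
  have hex : ∀ p : Fin n × Fin n, ∃ x : M,
      Real1 φ x (a p.1) ∧ Real1 ψ x (b p.2) ∧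
      (∀ l : Fin n, l ≠ p.1 → ¬ Real1 φ x (a l)) ∧
      (∀ k2 : Fin n, k2 ≠ p.2 → ¬ Real1 ψ x (b k2)) := by
    intro p
    obtain ⟨x, h1, h2, h3, h4⟩ := hICT p.1 p.2 (Finset.range n)
    exact ⟨x, h1, h2,
      fun l hl => h3 l (Finset.mem_range.2 l.isLt) (fun hv => hl (Fin.val_injective hv)),
      fun k2 hk => h4 k2 (Finset.mem_range.2 k2.isLt) (fun hv => hk (Fin.val_injective hv))⟩
  choose P hP1 hP2 hP3 hP4 using hex
  have Pinj : Function.Injective P := by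
    intro p p' hpe
    by_contra hne
    rcases eq_or_ne p.1 p'.1 with h1 | h1
    · have h2 : p.2 ≠ p'.2 := fun h2 => hne (Prod.ext h1 h2)
      exact hP4 p' p.2 h2 (by rw [← hpe]; exact hP2 p)
    · exact hP3 p' p.1 h1 (by rw [← hpe]; exact hP1 p)
  letI : DecidableRel r := fun x y => Classical.dec _
  letI : LinearOrder M := linearOrderOfSTO r
  have hlt_r : ∀ x y2 : M, x < y2 → r x y2 := fun _ _ h => h
  -- sort the grid points
  have hcard : (Finset.image P Finset.univ).card = n * n := by
    rw [Finset.card_image_of_injective _ Pinj, Finset.card_univ]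
    simp
  let e := (Finset.image P Finset.univ).orderIsoOfFin hcard
  let q : Fin (n * n) → M := fun t => (e t : M)
  have hq : ∀ s t : Fin (n * n), s < t → r (q s) (q t) := by
    intro s t hst
    exact hlt_r _ _ (Subtype.coe_lt_coe.2 (e.strictMono hst))
  have hsur : ∀ t, ∃ p : Fin n × Fin n, P p = q t := by
    intro t
    have hmem : q t ∈ Finset.image P Finset.univ := (e t).2
    rw [Finset.mem_image] at hmem
    obtain ⟨p, _, hp⟩ := hmem
    exact ⟨p, hp⟩
  choose ρ hρ using hsur
  have hrow : ∀ (t : Fin (n * n)) (i : Fin n),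
      q t ∈ {x | Real1 φ x (a i)} ↔ (ρ t).1 = i := by
    intro t i
    constructor
    · intro hmem
      by_contra hne
      rw [← hρ t] at hmem
      exact hP3 (ρ t) i (Ne.symm hne) hmem
    · intro he
      rw [← hρ t, ← he]
      exact hP1 (ρ t)
  have hcol : ∀ (t : Fin (n * n)) (j : Fin n),
      q t ∈ {x | Real1 ψ x (b j)} ↔ (ρ t).2 = j := by
    intro t j
    constructor
    · intro hmem
      by_contra hne
      rw [← hρ t] at hmem
      exact hP4 (ρ t) j (Ne.symm hne) hmem
    · intro he
      rw [← hρ t, ← he]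
      exact hP2 (ρ t)
  -- run-start counting
  have hbr : ∀ i : Fin n, (Finset.univ.filter fun t : Fin (n * n) =>
      ((t : ℕ) = 0 ∨ (ρ (predF t)).1 ≠ (ρ t).1) ∧ (ρ t).1 = i).card ≤ K :=
    card_start_le (S := fun i : Fin n => {x | Real1 φ x (a i)})
      (fun i => hKa i) q hq (fun t => (ρ t).1) hrow
  have hbc : ∀ j : Fin n, (Finset.univ.filter fun t : Fin (n * n) =>
      ((t : ℕ) = 0 ∨ (ρ (predF t)).2 ≠ (ρ t).2) ∧ (ρ t).2 = j).card ≤ K :=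
    card_start_le (S := fun j : Fin n => {x | Real1 ψ x (b j)})
      (fun j => hKb j) q hq (fun t => (ρ t).2) hcol
  -- every position is a row start or a column start
  let f : Fin (n * n) → Fin n ⊕ Fin n := fun t =>
    if ((t : ℕ) = 0 ∨ (ρ (predF t)).1 ≠ (ρ t).1) then Sum.inl (ρ t).1 else Sum.inr (ρ t).2
  have hfrow : ∀ (t : Fin (n * n)) (i : Fin n), f t = Sum.inl i →
      (((t : ℕ) = 0 ∨ (ρ (predF t)).1 ≠ (ρ t).1) ∧ (ρ t).1 = i) := by
    intro t i hf
    by_cases hc : ((t : ℕ) = 0 ∨ (ρ (predF t)).1 ≠ (ρ t).1)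
    · have hft : f t = Sum.inl (ρ t).1 := if_pos hc
      rw [hft] at hf
      exact ⟨hc, Sum.inl.inj hf⟩
    · have hft : f t = Sum.inr (ρ t).2 := if_neg hc
      rw [hft] at hf
      exact nomatch hf
  have hfcol : ∀ (t : Fin (n * n)) (j : Fin n), f t = Sum.inr j →
      (((t : ℕ) = 0 ∨ (ρ (predF t)).2 ≠ (ρ t).2) ∧ (ρ t).2 = j) := by
    intro t j hf
    by_cases hc : ((t : ℕ) = 0 ∨ (ρ (predF t)).1 ≠ (ρ t).1)
    · have hft : f t = Sum.inl (ρ t).1 := if_pos hc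
      rw [hft] at hf
      exact nomatch hf
    · have hft : f t = Sum.inr (ρ t).2 := if_neg hc
      rw [hft] at hf
      push_neg at hc
      obtain ⟨hc1, hc2⟩ := hc
      refine ⟨Or.inr ?_, Sum.inr.inj hf⟩
      intro hcol2
      have hpair : ρ (predF t) = ρ t := Prod.ext hc2 hcol2
      have hqe : q (predF t) = q t := by
        rw [← hρ (predF t), ← hρ t, hpair]
      have hplt : predF t < t := by
        show ((t : ℕ) - 1) < (t : ℕ)
        omega
      have := hq _ _ hplt
      rw [hqe] at this
      exact lt_irrefl (q t) this
  -- the final count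
  have hcount : (Finset.univ : Finset (Fin (n * n))).card =
      ∑ c : Fin n ⊕ Fin n, (Finset.univ.filter fun t => f t = c).card :=
    Finset.card_eq_sum_card_fiberwise (fun x _ => Finset.mem_univ _)
  have hbound : ∀ c : Fin n ⊕ Fin n,
      (Finset.univ.filter fun t => f t = c).card ≤ K := by
    intro c
    rcases c with i | j
    · refine le_trans (Finset.card_le_card ?_) (hbr i)
      intro t ht
      rw [Finset.mem_filter] at ht ⊢
      exact ⟨Finset.mem_univ _, hfrow t i ht.2⟩
    · refine le_trans (Finset.card_le_card ?_) (hbc j)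
      intro t ht
      rw [Finset.mem_filter] at ht ⊢
      exact ⟨Finset.mem_univ _, hfcol t j ht.2⟩
  have hsum : ∑ c : Fin n ⊕ Fin n, (Finset.univ.filter fun t => f t = c).card
      ≤ (n + n) * K := by
    calc ∑ c : Fin n ⊕ Fin n, (Finset.univ.filter fun t => f t = c).card
        ≤ ∑ _c : Fin n ⊕ Fin n, K := Finset.sum_le_sum (fun c _ => hbound c)
      _ = (n + n) * K := by
        rw [Finset.sum_const, Finset.card_univ]
        simp [Fintype.card_sum, mul_comm]
  have hfinal : n * n ≤ (n + n) * K := by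
    rw [← hcount] at hsum
    rwa [Finset.card_univ, Fintype.card_fin] at hsum
  rw [hn] at hfinal
  nlinarith [hfinal]

end DpMin
end

section
/- Every o-minimal complete theory is dp-minimal: if L is a language containing a binary relation symbol <, and T is a complete L-theory such that in every model M of T the symbol < is interpreted as a dense linear order and every subset of M definable with parameters by an L-formula in one free variable is a finite union of singletons and open intervals (a,b) with endpoints a,b ∈ M ∪ {−∞,+∞}, then no model of T admits an ICT pattern. -/
open FirstOrder Language Set

universe u v w

namespace DpMin

variable {L : FirstOrder.Language.{u, v}}

/-- A set is an open interval with endpoints in `M ∪ {−∞, +∞}` with respect to the relation `r`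
(thought of as `<`). -/
def IsOpenIntervalRel {M : Type w} (r : M → M → Prop) (Y : Set M) : Prop :=
  (∃ a b : M, Y = {x : M | r a x ∧ r x b}) ∨
  (∃ a : M, Y = {x : M | r a x}) ∨
  (∃ b : M, Y = {x : M | r x b}) ∨
  Y = Set.univ



open Structure Finset

lemma strictMono_of_step {α : Type*} [Preorder α] {A : ℕ} {f : Fin A → α}
    (h : ∀ (k : ℕ) (hk : k + 1 < A), f ⟨k, by omega⟩ < f ⟨k + 1, hk⟩) : StrictMono f := by
  rintro ⟨c, hc⟩ ⟨d, hd⟩ hcd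
  rw [Fin.mk_lt_mk] at hcd
  induction d with
  | zero => omega
  | succ d ih =>
    rcases Nat.lt_or_ge c d with h1 | h1
    · exact lt_trans (ih (by omega) h1) (h d hd)
    · have : c = d := by omega
      subst this
      exact h c hd


lemma no_altChain_of_pieces {M : Type*} {r : M → M → Prop} (hto : IsStrictTotalOrder M r)
    {X : Set M} {P : ℕ} {C : Fin P → Set M}
    (hC : ∀ i, (∃ p, C i = {p}) ∨ IsOpenIntervalRel r (C i)) (hX : X = ⋃ i, C i)
    (z : Fin (2 * P + 2) → M) (hz : ∀ s t : Fin (2 * P + 2), s < t → r (z s) (z t)) :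
    ¬ ∀ t : Fin (2 * P + 2), z t ∈ X ↔ Even t.1 := by
  haveI := hto
  intro halt
  have htrans : ∀ {x y w : M}, r x y → r y w → r x w := fun h1 h2 => _root_.trans h1 h2
  have hirr : ∀ x : M, ¬ r x x := fun x => irrefl x
  -- each even point lies in some piece
  have hmem : ∀ t : Fin (P + 1), z ⟨2 * t.1, by omega⟩ ∈ X := by
    intro t
    rw [halt]
    exact ⟨t.1, by ring⟩
  have hpick : ∀ t : Fin (P + 1), ∃ i : Fin P, z ⟨2 * t.1, by omega⟩ ∈ C i := by
    intro t
    have := hmem t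
    rw [hX, Set.mem_iUnion] at this
    exact this
  choose g hg using hpick
  obtain ⟨t₁, t₂, hne, heq⟩ := Fintype.exists_ne_map_eq_of_card_lt g (by simp)
  -- wlog t₁ < t₂
  wlog hlt : t₁ < t₂ generalizing t₁ t₂
  · exact this t₂ t₁ hne.symm heq.symm (hne.lt_or_gt.resolve_left hlt)
  have h12 : t₁.1 < t₂.1 := hlt
  -- the three relevant points
  have hum : r (z ⟨2 * t₁.1, by omega⟩) (z ⟨2 * t₁.1 + 1, by omega⟩) :=
    hz _ _ (by rw [Fin.mk_lt_mk]; omega)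
  have hmv : r (z ⟨2 * t₁.1 + 1, by omega⟩) (z ⟨2 * t₂.1, by omega⟩) :=
    hz _ _ (by rw [Fin.mk_lt_mk]; omega)
  have hu : z ⟨2 * t₁.1, by omega⟩ ∈ C (g t₁) := hg t₁
  have hv : z ⟨2 * t₂.1, by omega⟩ ∈ C (g t₁) := heq ▸ hg t₂
  have hmodd : ¬ (z ⟨2 * t₁.1 + 1, by omega⟩ ∈ X) := by
    rw [halt]
    intro h
    rcases h with ⟨w, hw⟩
    have hw' : 2 * t₁.1 + 1 = w + w := hw
    omega
  apply hmodd
  have hmC : z ⟨2 * t₁.1 + 1, by omega⟩ ∈ C (g t₁) := by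
    rcases hC (g t₁) with ⟨p, hp⟩ | hint
    · rw [hp] at hu hv
      exact absurd (htrans (hu ▸ hum) (hv ▸ hmv)) (hirr p)
    · rcases hint with ⟨p, q, hpq⟩ | ⟨p, hp⟩ | ⟨q, hq⟩ | huniv
      · rw [hpq] at hu hv ⊢
        exact ⟨htrans hu.1 hum, htrans hmv hv.2⟩
      · rw [hp] at hu ⊢
        exact htrans hu hum
      · rw [hq] at hv ⊢
        exact htrans hmv hv
      · rw [huniv]; trivial
  rw [hX]
  exact Set.mem_iUnion.2 ⟨g t₁, hmC⟩

lemma triple_of_no_gap {n : ℕ} {S : Finset (Fin n)} {v0 v2 : Fin n}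
    (h0 : v0 ∈ S) (h2 : v2 ∈ S) (hle : v0.1 + 2 ≤ v2.1)
    (hg : ∀ g : Fin n, v0 < g → g < v2 → g ∈ S) :
    ∃ (k : ℕ) (hk : k + 2 < n), (⟨k, by omega⟩ : Fin n) ∈ S ∧
      (⟨k + 1, by omega⟩ : Fin n) ∈ S ∧ (⟨k + 2, hk⟩ : Fin n) ∈ S := by
  have hn := v2.2
  refine ⟨v0.1, by omega, ?_, ?_, ?_⟩
  · have e : (⟨v0.1, by omega⟩ : Fin n) = v0 := Fin.ext rfl
    rw [e]; exact h0
  · exact hg ⟨v0.1 + 1, by omega⟩ (by rw [Fin.lt_def]; show v0.1 < v0.1 + 1; omega)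
      (by rw [Fin.lt_def]; show v0.1 + 1 < v2.1; omega)
  · rcases Nat.eq_or_lt_of_le hle with heq | hlt
    · have e : (⟨v0.1 + 2, by omega⟩ : Fin n) = v2 := Fin.ext heq
      rw [e]; exact h2
    · exact hg ⟨v0.1 + 2, by omega⟩ (by rw [Fin.lt_def]; show v0.1 < v0.1 + 2; omega)
        (by rw [Fin.lt_def]; show v0.1 + 2 < v2.1; omega)

/-- If a subset of `Fin n` of size `R > 2B+2` has no three consecutive elements, it admits an
alternating chain of length `2B+2`. -/
lemma exists_triple_of_no_altChain {n R B : ℕ} {S : Finset (Fin n)} (hcard : S.card = R)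
    (hR : 2 * B + 2 < R)
    (hnochain : ¬ ∃ p : Fin (2 * B + 2) → Fin n, StrictMono p ∧ ∀ t, (p t ∈ S ↔ Even t.1)) :
    ∃ (k : ℕ) (hk : k + 2 < n), (⟨k, by omega⟩ : Fin n) ∈ S ∧
      (⟨k + 1, by omega⟩ : Fin n) ∈ S ∧ (⟨k + 2, hk⟩ : Fin n) ∈ S := by
  by_contra htriple
  push_neg at htriple
  have q := S.orderEmbOfFin hcard
  have hqmem : ∀ t, S.orderEmbOfFin hcard t ∈ S := fun t => S.orderEmbOfFin_mem hcard t
  have hgap : ∀ t : Fin (B + 1), ∃ g : Fin n,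
      S.orderEmbOfFin hcard ⟨2 * t.1, by omega⟩ < g ∧
      g < S.orderEmbOfFin hcard ⟨2 * t.1 + 2, by omega⟩ ∧ g ∉ S := by
    intro t
    by_contra hg
    push_neg at hg
    have h01 : S.orderEmbOfFin hcard ⟨2 * t.1, by omega⟩ <
        S.orderEmbOfFin hcard ⟨2 * t.1 + 1, by omega⟩ :=
      (S.orderEmbOfFin hcard).strictMono (by rw [Fin.mk_lt_mk]; omega)
    have h12 : S.orderEmbOfFin hcard ⟨2 * t.1 + 1, by omega⟩ <
        S.orderEmbOfFin hcard ⟨2 * t.1 + 2, by omega⟩ :=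
      (S.orderEmbOfFin hcard).strictMono (by rw [Fin.mk_lt_mk]; omega)
    have hle : (S.orderEmbOfFin hcard ⟨2 * t.1, by omega⟩).1 + 2 ≤
        (S.orderEmbOfFin hcard ⟨2 * t.1 + 2, by omega⟩).1 := by
      rw [Fin.lt_def] at h01 h12
      omega
    obtain ⟨k, hk, m0, m1, m2⟩ := triple_of_no_gap (hqmem _) (hqmem _) hle hg
    exact htriple k hk m0 m1 m2
  choose gap hgap1 hgap2 hgap3 using hgap
  apply hnochain
  refine ⟨fun u => if Even u.1 then S.orderEmbOfFin hcard ⟨u.1, by omega⟩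
    else gap ⟨u.1 / 2, by omega⟩, ?_, ?_⟩
  · apply strictMono_of_step
    intro k hk
    by_cases hke : Even k
    · have hko : ¬ Even (k + 1) := by simp [Nat.even_add_one, hke]
      simp only [hke, hko, if_true, if_false, Fin.val_mk]
      have e : (⟨2 * ((k + 1) / 2 : ℕ), by omega⟩ : Fin R) = ⟨k, by omega⟩ := by
        apply Fin.ext
        have := Nat.even_iff.mp hke
        simp
        omega
      rw [← e]
      have := hgap1 ⟨(k + 1) / 2, by omega⟩
      convert this using 3 <;> omega
    · have hko : Even (k + 1) := Nat.even_add_one.mpr hke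
      simp only [hke, hko, if_true, if_false, Fin.val_mk]
      have e : (⟨2 * ((k : ℕ) / 2) + 2, by omega⟩ : Fin R) = ⟨k + 1, by omega⟩ := by
        apply Fin.ext
        have := Nat.odd_iff.mp (Nat.not_even_iff_odd.mp hke)
        simp
        omega
      rw [← e]
      exact hgap2 ⟨k / 2, by omega⟩
  · intro t
    by_cases hte : Even t.1
    · simp only [hte, if_true, iff_true]
      exact hqmem _
    · simp only [hte, if_false, iff_false]
      exact fun h => (hgap3 ⟨t.1 / 2, by omega⟩) h

/-- From `B+1` marked positions, each being "good" with a "bad" successor, build an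
alternating chain of length `2B+2`. -/
lemma chain_of_marked {n B : ℕ} {G : Fin n → Prop} {s' : Finset (Fin n)} (hcard : s'.card = B + 1)
    (hmem : ∀ k ∈ s', G k ∧ ∃ h : k.1 + 1 < n, ¬ G ⟨k.1 + 1, h⟩) :
    ∃ p : Fin (2 * B + 2) → Fin n, StrictMono p ∧ ∀ t, (G (p t) ↔ Even t.1) := by
  classical
  have hq : ∀ t : Fin (B + 1), s'.orderEmbOfFin hcard t ∈ s' :=
    fun t => s'.orderEmbOfFin_mem hcard t
  have hsucc : ∀ t : Fin (B + 1), (s'.orderEmbOfFin hcard t).1 + 1 < n :=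
    fun t => (hmem _ (hq t)).2.choose
  have hGq : ∀ t : Fin (B + 1), G (s'.orderEmbOfFin hcard t) := fun t => (hmem _ (hq t)).1
  have hGs : ∀ t : Fin (B + 1), ¬ G ⟨(s'.orderEmbOfFin hcard t).1 + 1, hsucc t⟩ :=
    fun t => (hmem _ (hq t)).2.choose_spec
  refine ⟨fun u => if Even u.1 then s'.orderEmbOfFin hcard ⟨u.1 / 2, by omega⟩
    else ⟨(s'.orderEmbOfFin hcard ⟨u.1 / 2, by omega⟩).1 + 1, hsucc _⟩, ?_, ?_⟩
  · apply strictMono_of_step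
    intro k hk
    by_cases hke : Even k
    · have hko : ¬ Even (k + 1) := by simp [Nat.even_add_one, hke]
      simp only [hke, hko, if_true, if_false, Fin.val_mk]
      have e : (⟨(k + 1) / 2, by omega⟩ : Fin (B + 1)) = ⟨k / 2, by omega⟩ :=
        Fin.ext (by have := Nat.even_iff.mp hke; show (k + 1) / 2 = k / 2; omega)
      rw [e, Fin.lt_def]
      exact Nat.lt_succ_self _
    · have hko : Even (k + 1) := Nat.even_add_one.mpr hke
      have hk1 : k % 2 = 1 := Nat.odd_iff.mp (Nat.not_even_iff_odd.mp hke)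
      simp only [hke, hko, if_true, if_false, Fin.val_mk]
      have e : (⟨(k + 1) / 2, by omega⟩ : Fin (B + 1)) = ⟨k / 2 + 1, by omega⟩ :=
        Fin.ext (by show (k + 1) / 2 = k / 2 + 1; omega)
      rw [e, Fin.lt_def]
      have hlt : (s'.orderEmbOfFin hcard ⟨k / 2, by omega⟩).1 <
          (s'.orderEmbOfFin hcard ⟨k / 2 + 1, by omega⟩).1 :=
        (s'.orderEmbOfFin hcard).strictMono (by rw [Fin.mk_lt_mk]; omega)
      have hne : (s'.orderEmbOfFin hcard ⟨k / 2, by omega⟩).1 + 1 ≠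
          (s'.orderEmbOfFin hcard ⟨k / 2 + 1, by omega⟩).1 := by
        intro he
        apply hGs ⟨k / 2, by omega⟩
        have e2 : (⟨(s'.orderEmbOfFin hcard ⟨k / 2, by omega⟩).1 + 1, hsucc _⟩ : Fin n) =
            s'.orderEmbOfFin hcard ⟨k / 2 + 1, by omega⟩ := Fin.ext he
        rw [e2]
        exact hGq _
      show (s'.orderEmbOfFin hcard ⟨k / 2, by omega⟩).1 + 1 <
        (s'.orderEmbOfFin hcard ⟨k / 2 + 1, by omega⟩).1
      omega
  · intro t
    by_cases hte : Even t.1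
    · simp only [hte, if_true, iff_true]
      exact hGq _
    · simp only [hte, if_false, iff_false]
      exact hGs _

lemma grid_combinatorics {R Q B n : ℕ} (c : Fin n → Fin R × Fin Q)
    (hc : Function.Bijective c) (hR : 2 * B + 2 < R) (hQ : R * B < Q) :
    (∃ i : Fin R, ∃ p : Fin (2 * B + 2) → Fin n, StrictMono p ∧
      ∀ t, ((c (p t)).1 = i ↔ Even t.1)) ∨
    (∃ j : Fin Q, ∃ p : Fin (2 * B + 2) → Fin n, StrictMono p ∧
      ∀ t, ((c (p t)).2 = j ↔ Even t.1)) := by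
  classical
  by_cases hcol : ∃ j : Fin Q, ∃ p : Fin (2 * B + 2) → Fin n, StrictMono p ∧
      ∀ t, ((c (p t)).2 = j ↔ Even t.1)
  · exact Or.inr hcol
  left
  push_neg at hcol
  -- Step A: each column has three consecutive positions
  have stepA : ∀ j : Fin Q, ∃ (k : ℕ) (hk : k + 2 < n),
      (c ⟨k, by omega⟩).2 = j ∧ (c ⟨k + 1, by omega⟩).2 = j ∧ (c ⟨k + 2, hk⟩).2 = j := by
    intro j
    have hSmem : ∀ k : Fin n, k ∈ univ.filter (fun k => (c k).2 = j) ↔ (c k).2 = j := by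
      intro k; simp
    have hcard : (univ.filter (fun k => (c k).2 = j)).card = R := by
      have h := Finset.card_bij (s := univ.filter (fun k => (c k).2 = j))
        (t := (univ : Finset (Fin R))) (fun k _ => (c k).1)
        (fun k _ => Finset.mem_univ _) ?_ ?_
      · simpa using h
      · intro k1 hk1 k2 hk2 hfst
        apply hc.1
        exact Prod.ext hfst (((hSmem k1).1 hk1).trans (((hSmem k2).1 hk2).symm))
      · intro i _
        obtain ⟨k, hk⟩ := hc.2 (i, j)
        exact ⟨k, (hSmem k).2 (by rw [hk]), by simp [hk]⟩
    have hnochain : ¬ ∃ p : Fin (2 * B + 2) → Fin n, StrictMono p ∧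
        ∀ t, (p t ∈ univ.filter (fun k => (c k).2 = j) ↔ Even t.1) := by
      rintro ⟨p, hp, hmem⟩
      obtain ⟨t, ht⟩ := hcol j p hp
      rcases ht with ⟨h1, h2⟩ | ⟨h1, h2⟩
      · exact h2 ((hmem t).1 ((hSmem _).2 h1))
      · exact h1 ((hSmem _).1 ((hmem t).2 h2))
    obtain ⟨k, hk, m0, m1, m2⟩ := exists_triple_of_no_altChain hcard hR hnochain
    exact ⟨k, hk, (hSmem _).1 m0, (hSmem _).1 m1, (hSmem _).1 m2⟩
  choose kf hkf hm0 hm1 hm2 using stepA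
  -- middle positions and their rows
  have hmid2 : ∀ j : Fin Q, (c ⟨kf j + 1, by have := hkf j; omega⟩).2 = j := hm1
  set rowOf : Fin Q → Fin R := fun j => (c ⟨kf j + 1, by have := hkf j; omega⟩).1 with hrowOf
  obtain ⟨i, hi⟩ := Fintype.exists_lt_card_fiber_of_mul_lt_card rowOf
    (by simpa using hQ)
  -- the set of middle positions for columns in the fiber
  set mid : Fin Q → Fin n := fun j => ⟨kf j + 1, by have := hkf j; omega⟩ with hmiddef
  have hmidinj : Set.InjOn mid (univ.filter (fun j => rowOf j = i)) := by
    intro j1 _ j2 _ he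
    have e1 : (c (mid j1)).2 = j1 := hmid2 j1
    have e2 : (c (mid j2)).2 = j2 := hmid2 j2
    rw [he] at e1
    exact e1.symm.trans e2
  have hcardmid : B + 1 ≤ ((univ.filter (fun j => rowOf j = i)).image mid).card := by
    rw [Finset.card_image_of_injOn hmidinj]
    omega
  obtain ⟨s', hs'sub, hs'card⟩ := Finset.exists_subset_card_eq hcardmid
  have hmem : ∀ k ∈ s', (c k).1 = i ∧ ∃ h : k.1 + 1 < n, ¬ (c ⟨k.1 + 1, h⟩).1 = i := by
    intro k hk
    obtain ⟨j, hj, rfl⟩ := Finset.mem_image.1 (hs'sub hk)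
    have hji : rowOf j = i := by simpa using hj
    constructor
    · exact hji
    · refine ⟨by have := hkf j; simpa [hmiddef] using (by omega : kf j + 1 + 1 < n), ?_⟩
      intro hcontra
      -- position kf j + 2 is in column j, so it differs from the middle, but has the same row i
      have hc2 : (c ⟨kf j + 2, hkf j⟩).2 = j := hm2 j
      have hcontra2 : (c ⟨kf j + 2, hkf j⟩).1 = i := hcontra
      have : (⟨kf j + 2, hkf j⟩ : Fin n) = mid j := by
        apply hc.1
        apply Prod.ext
        · rw [hcontra2, ← hji]
        · rw [hc2, hmid2 j]
      have : kf j + 2 = kf j + 1 := congrArg Fin.val this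
      omega
  obtain ⟨p, hp, hpm⟩ := chain_of_marked hs'card hmem
  exact ⟨i, p, hp, hpm⟩

def qmk {M : Type w} (U : Ultrafilter ℕ) (f : ℕ → M) :
    (U : Filter ℕ).Product (fun _ : ℕ => M) := ↑f

lemma real1_iff_eventually {M : Type w} [L.Structure M] [Nonempty M] {m : ℕ}
    (φ : L.Formula (Fin 1 ⊕ Fin m)) (U : Ultrafilter ℕ) (f : ℕ → M) (pa : Fin m → ℕ → M) :
    Real1 φ (qmk U f) (fun t => qmk U (pa t)) ↔
      ∀ᶠ n in (U : Filter ℕ), Real1 φ (f n) (fun t => pa t n) := by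
  have hcast := Ultraproduct.realize_formula_cast (u := U) φ (Sum.elim (fun _ => f) pa)
  refine Iff.trans ?_ (Iff.trans hcast (Filter.eventually_congr (Filter.Eventually.of_forall
    fun n => Iff.of_eq (congrArg _ (by funext b; cases b <;> rfl)))))
  exact Iff.of_eq (congrArg φ.Realize (by funext b; cases b <;> rfl))

lemma relMap_iff_eventually {M : Type w} [L.Structure M] [Nonempty M] (lt : L.Relations 2)
    (U : Ultrafilter ℕ) (f g : ℕ → M) :
    Structure.RelMap lt ![qmk U f, qmk U g] ↔
      ∀ᶠ n in (U : Filter ℕ), Structure.RelMap lt ![f n, g n] := by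
  have hcast := Ultraproduct.realize_formula_cast (u := U)
    ((lt.formula₂ (Term.var 0) (Term.var 1)) : L.Formula (Fin 2)) ![f, g]
  refine Iff.trans ?_ (Iff.trans hcast (Filter.eventually_congr (Filter.Eventually.of_forall
    fun n => ?_)))
  · refine Iff.trans (Iff.of_eq (congrArg (RelMap lt) ?_)) Formula.realize_rel₂.symm
    funext i; fin_cases i <;> rfl
  · refine Iff.trans Formula.realize_rel₂ (Iff.of_eq (congrArg (RelMap lt) ?_))
    funext i; fin_cases i <;> rfl

/-- Uniform alternation bound across a sequence of parameters, via an ultrapower. -/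
lemma exists_alt_bound (lt : L.Relations 2) (T : L.Theory)
    (hlin : ∀ (M : Type w) [L.Structure M] [Nonempty M], M ⊨ T →
      IsStrictTotalOrder M (fun x y : M => Structure.RelMap lt ![x, y]))
    (hom : ∀ (M : Type w) [L.Structure M] [Nonempty M], M ⊨ T →
      ∀ (m : ℕ) (φ : L.Formula (Fin 1 ⊕ Fin m)) (a : Fin m → M),
        ∃ (N : ℕ) (C : Fin N → Set M),
          (∀ i, (∃ p : M, C i = {p}) ∨
            IsOpenIntervalRel (fun x y : M => Structure.RelMap lt ![x, y]) (C i)) ∧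
          {x : M | Real1 φ x a} = ⋃ i, C i)
    {M : Type w} [L.Structure M] [Nonempty M] (hM : M ⊨ T)
    {m : ℕ} (φ : L.Formula (Fin 1 ⊕ Fin m)) (a : ℕ → Fin m → M) :
    ∃ A : ℕ, ∀ (i : ℕ) (z : Fin A → M),
      (∀ s t : Fin A, s < t → Structure.RelMap lt ![z s, z t]) →
      ¬ ∀ t : Fin A, (Real1 φ (z t) (a i) ↔ Even t.1) := by
  by_contra hcon
  push_neg at hcon
  choose idx zc hmono halt using hcon
  haveI : (Filter.cofinite : Filter ℕ).NeBot := Filter.cofinite_neBot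
  set U : Ultrafilter ℕ := Ultrafilter.of Filter.cofinite with hUdef
  have hgt : ∀ k : ℕ, ∀ᶠ n in (U : Filter ℕ), k < n := by
    intro k
    refine Filter.Eventually.filter_mono (Ultrafilter.of_le _) ?_
    rw [Filter.eventually_cofinite]
    simpa [Nat.not_lt] using Set.finite_le_nat k
  have hNT : ((U : Filter ℕ).Product (fun _ : ℕ => M)) ⊨ T := by
    rw [Theory.model_iff]
    intro σ hσ
    rw [Ultraproduct.sentence_realize]
    haveI := hM
    exact Filter.Eventually.of_forall (fun _ => T.realize_sentence_of_mem hσ)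
  obtain ⟨P, C, hC, hXeq⟩ := hom ((U : Filter ℕ).Product (fun _ : ℕ => M)) hNT m φ
    (fun t => qmk U (fun n => a (idx n) t))
  -- the alternating chain of length 2P+2 in the ultrapower
  set zf : Fin (2 * P + 2) → ℕ → M :=
    fun k n => if h : (k : ℕ) < n then zc n ⟨k.1, h⟩ else Classical.arbitrary M with hzfdef
  have hzf : ∀ (k : Fin (2 * P + 2)) (n : ℕ) (h : k.1 < n), zf k n = zc n ⟨k.1, h⟩ := by
    intro k n h
    simp only [hzfdef]
    rw [dif_pos h]
  refine no_altChain_of_pieces (hlin _ hNT) hC hXeq (fun k => qmk U (zf k)) ?_ ?_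
  · intro s t hst
    rw [relMap_iff_eventually]
    filter_upwards [hgt t.1] with n hn
    rw [hzf s n (by omega : s.1 < n), hzf t n hn]
    exact hmono n ⟨s.1, by omega⟩ ⟨t.1, hn⟩ (by rw [Fin.mk_lt_mk]; exact hst)
  · intro t
    have hmem : (qmk U (zf t) ∈ {x | Real1 φ x (fun t => qmk U (fun n => a (idx n) t))}) ↔
        Real1 φ (qmk U (zf t)) (fun t => qmk U (fun n => a (idx n) t)) := Iff.rfl
    rw [hmem, real1_iff_eventually]
    by_cases ht : Even t.1
    · simp only [ht, iff_true]
      filter_upwards [hgt t.1] with n hn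
      rw [hzf t n hn]
      exact (halt n ⟨t.1, hn⟩).2 ht
    · simp only [ht, iff_false]
      intro hev
      obtain ⟨n, h1, h2⟩ := (hev.and (hgt t.1)).exists
      rw [hzf t n h2] at h1
      exact ht ((halt n ⟨t.1, h2⟩).1 h1)


/-- Every o-minimal complete theory is dp-minimal: if `<` is a dense (strict) linear order in
every model and every set definable with parameters in one free variable is a finite union of
singletons and open intervals, then no model admits an ICT pattern. -/
theorem dpMinimal_of_oMinimal {L : FirstOrder.Language.{u, v}}
    (lt : L.Relations 2) (T : L.Theory) (hT : T.IsComplete)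
    (hlin : ∀ (M : Type w) [L.Structure M] [Nonempty M], M ⊨ T →
      IsStrictTotalOrder M (fun x y : M => Structure.RelMap lt ![x, y]))
    (hdense : ∀ (M : Type w) [L.Structure M] [Nonempty M], M ⊨ T →
      ∀ a b : M, Structure.RelMap lt ![a, b] →
        ∃ c : M, Structure.RelMap lt ![a, c] ∧ Structure.RelMap lt ![c, b])
    (hom : ∀ (M : Type w) [L.Structure M] [Nonempty M], M ⊨ T →
      ∀ (m : ℕ) (φ : L.Formula (Fin 1 ⊕ Fin m)) (a : Fin m → M),
        ∃ (N : ℕ) (C : Fin N → Set M),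
          (∀ i, (∃ p : M, C i = {p}) ∨
            IsOpenIntervalRel (fun x y : M => Structure.RelMap lt ![x, y]) (C i)) ∧
          {x : M | Real1 φ x a} = ⋃ i, C i) :
    IsDpMinimal.{u, v, w} T := by
  intro M _ _ hM hpat
  obtain ⟨m, φ, ψ, a, b, hpat⟩ := hpat
  obtain ⟨A₁, hA₁⟩ := exists_alt_bound lt T hlin hom hM φ a
  obtain ⟨A₂, hA₂⟩ := exists_alt_bound lt T hlin hom hM ψ b
  set B : ℕ := max A₁ A₂ with hBdef
  set R : ℕ := 2 * B + 3 with hRdef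
  set Q : ℕ := R * B + 1 with hQdef
  -- the grid of witnesses
  have hwit : ∀ pr : Fin R × Fin Q, ∃ x : M,
      Real1 φ x (a pr.1) ∧ Real1 ψ x (b pr.2) ∧
      (∀ l ∈ Finset.range (R + Q), l ≠ (pr.1 : ℕ) → ¬ Real1 φ x (a l)) ∧
      (∀ k ∈ Finset.range (R + Q), k ≠ (pr.2 : ℕ) → ¬ Real1 ψ x (b k)) :=
    fun pr => hpat pr.1 pr.2 (Finset.range (R + Q))
  choose w hw1 hw2 hw3 hw4 using hwit
  -- membership criteria
  have hrow : ∀ (pr : Fin R × Fin Q) (i : Fin R), Real1 φ (w pr) (a i) ↔ pr.1 = i := by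
    intro pr i
    constructor
    · intro h
      by_contra hne
      exact hw3 pr i (Finset.mem_range.2 (by omega)) (fun hv => hne (Fin.ext hv).symm) h
    · rintro rfl
      exact hw1 pr
  have hcol : ∀ (pr : Fin R × Fin Q) (j : Fin Q), Real1 ψ (w pr) (b j) ↔ pr.2 = j := by
    intro pr j
    constructor
    · intro h
      by_contra hne
      exact hw4 pr j (Finset.mem_range.2 (by omega)) (fun hv => hne (Fin.ext hv).symm) h
    · rintro rfl
      exact hw2 pr
  have hwinj : Function.Injective w := by
    intro pr pr' he
    have h1 : pr.1 = pr'.1 := by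
      have h := (hrow pr pr.1).2 rfl
      rw [he] at h
      exact ((hrow pr' pr.1).1 h).symm
    have h2 : pr.2 = pr'.2 := by
      have h := (hcol pr pr.2).2 rfl
      rw [he] at h
      exact ((hcol pr' pr.2).1 h).symm
    exact Prod.ext h1 h2
  -- linear order on M from the strict total order
  have hto := hlin M hM
  haveI := hto
  haveI : DecidableRel (fun x y : M => Structure.RelMap lt ![x, y]) :=
    fun _ _ => Classical.propDecidable _
  letI : LinearOrder M := linearOrderOfSTO (fun x y : M => Structure.RelMap lt ![x, y])
  have hltiff : ∀ x y : M, x < y ↔ Structure.RelMap lt ![x, y] := fun _ _ => Iff.rfl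
  -- sort the grid
  set n : ℕ := R * Q with hndef
  set h0 : Fin n → M := fun k => w (finProdFinEquiv.symm k) with hh0def
  set σ : Equiv.Perm (Fin n) := Tuple.sort h0 with hσdef
  have hG : StrictMono (h0 ∘ σ) :=
    (Tuple.monotone_sort h0).strictMono_of_injective
      (hwinj.comp (finProdFinEquiv.symm.injective) |>.comp σ.injective)
  set c : Fin n → Fin R × Fin Q := fun k => finProdFinEquiv.symm (σ k) with hcdef
  have hcbij : Function.Bijective c :=
    (finProdFinEquiv.symm.bijective).comp σ.bijective
  have hgrid := grid_combinatorics (B := B) c hcbij (by omega) (by omega)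
  rcases hgrid with ⟨i, p, hp, hpm⟩ | ⟨j, p, hp, hpm⟩
  · -- row chain contradicts the bound for φ
    have hle : A₁ ≤ 2 * B + 2 := by omega
    refine hA₁ i (fun t => w (c (p (Fin.castLE hle t)))) ?_ ?_
    · intro s t hst
      rw [← hltiff]
      refine hG (hp ?_)
      rw [Fin.lt_def] at hst ⊢
      exact hst
    · intro t
      rw [hrow]
      exact hpm (Fin.castLE hle t)
  · have hle : A₂ ≤ 2 * B + 2 := by omega
    refine hA₂ j (fun t => w (c (p (Fin.castLE hle t)))) ?_ ?_
    · intro s t hst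
      rw [← hltiff]
      refine hG (hp ?_)
      rw [Fin.lt_def] at hst ⊢
      exact hst
    · intro t
      rw [hcol]
      exact hpm (Fin.castLE hle t)


end DpMin
end
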